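/- arXiv:0904.3847 — 6 statements merged into one kernel-verified Lean document; each statement's English description precedes it below -/
import Mathlib

section
/- The normalizing constant of the standardized symmetric Beta density converges to that of the standard Gaussian: if a_n → ∞, then (8γn)^{-1/2} · 2^{-2a_n + 2} / B(a_n, a_n) → (2π)^{-1/2}, where a_n/n → γ > 0 and B is the Beta function. -/
open Filter Real

private lemma gamma_half_upper {x : ℝ} (hx : 0 < x) :
    Real.Gamma (x + 1/2) ≤ Real.Gamma x * Real.sqrt x := by
  have hc := Real.convexOn_log_Gamma
  have h := hc.2 (Set.mem_Ioi.mpr hx) (Set.mem_Ioi.mpr (by linarith : (0:ℝ) < x + 1))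
    (by norm_num : (0:ℝ) ≤ 1/2) (by norm_num : (0:ℝ) ≤ 1/2) (by norm_num)
  simp only [smul_eq_mul, Function.comp_apply] at h
  have hmid : (1/2:ℝ) * x + (1/2) * (x + 1) = x + 1/2 := by ring
  rw [hmid] at h
  have hadd : Real.Gamma (x + 1) = x * Real.Gamma x := Real.Gamma_add_one hx.ne'
  have hG : 0 < Real.Gamma x := Real.Gamma_pos_of_pos hx
  have hGh : 0 < Real.Gamma (x + 1/2) := Real.Gamma_pos_of_pos (by linarith)
  have hRHS : 0 < Real.Gamma x * Real.sqrt x := by positivity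
  rw [← Real.log_le_log_iff hGh hRHS]
  rw [Real.log_mul hG.ne' (Real.sqrt_pos.mpr hx).ne', Real.log_sqrt hx.le]
  calc Real.log (Real.Gamma (x + 1/2))
      ≤ 1/2 * Real.log (Real.Gamma x) + 1/2 * Real.log (Real.Gamma (x+1)) := h
    _ = Real.log (Real.Gamma x) + Real.log x / 2 := by
        rw [hadd, Real.log_mul hx.ne' hG.ne']; ring

private lemma gamma_half_lower {x : ℝ} (hx : 0 < x) :
    x * Real.Gamma x ≤ Real.Gamma (x + 1/2) * Real.sqrt (x + 1/2) := by
  have hc := Real.convexOn_log_Gamma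
  have h := hc.2 (Set.mem_Ioi.mpr (by linarith : (0:ℝ) < x + 1/2))
    (Set.mem_Ioi.mpr (by linarith : (0:ℝ) < x + 3/2))
    (by norm_num : (0:ℝ) ≤ 1/2) (by norm_num : (0:ℝ) ≤ 1/2) (by norm_num)
  simp only [smul_eq_mul, Function.comp_apply] at h
  have hmid : (1/2:ℝ) * (x + 1/2) + (1/2) * (x + 3/2) = x + 1 := by ring
  rw [hmid] at h
  have h32 : Real.Gamma (x + 3/2) = (x + 1/2) * Real.Gamma (x + 1/2) := by
    have := Real.Gamma_add_one (s := x + 1/2) (by positivity)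
    rw [show x + 1/2 + 1 = x + 3/2 by ring] at this
    exact this
  have hG : 0 < Real.Gamma x := Real.Gamma_pos_of_pos hx
  have hGh : 0 < Real.Gamma (x + 1/2) := Real.Gamma_pos_of_pos (by linarith)
  have hadd : Real.Gamma (x + 1) = x * Real.Gamma x := Real.Gamma_add_one hx.ne'
  have hL : 0 < x * Real.Gamma x := by positivity
  have hR : 0 < Real.Gamma (x + 1/2) * Real.sqrt (x + 1/2) := by positivity
  rw [← Real.log_le_log_iff hL hR, Real.log_mul hGh.ne' (Real.sqrt_pos.mpr (by linarith)).ne',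
    Real.log_sqrt (by linarith)]
  calc Real.log (x * Real.Gamma x) = Real.log (Real.Gamma (x+1)) := by rw [hadd]
    _ ≤ 1/2 * Real.log (Real.Gamma (x + 1/2)) + 1/2 * Real.log (Real.Gamma (x + 3/2)) := h
    _ = Real.log (Real.Gamma (x + 1/2)) + Real.log (x + 1/2) / 2 := by
        rw [h32, Real.log_mul (by positivity) hGh.ne']; ring

private lemma gamma_ratio_tendsto :
    Tendsto (fun x : ℝ => Real.Gamma (x + 1/2) / (Real.Gamma x * Real.sqrt x))
      atTop (nhds 1) := by
  have h1 : Tendsto (fun x : ℝ => x / (x + 1/2)) atTop (nhds 1) := by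
    have h0 : Tendsto (fun x : ℝ => 1 - (1/2) * (x + 1/2)⁻¹) atTop (nhds 1) := by
      have := ((tendsto_atTop_add_const_right atTop (1/2 : ℝ)
        tendsto_id).inv_tendsto_atTop).const_mul (1/2 : ℝ)
      simpa using tendsto_const_nhds.sub this
    refine h0.congr' ?_
    filter_upwards [eventually_gt_atTop (0:ℝ)] with x hx
    field_simp
    ring
  have hlow : Tendsto (fun x : ℝ => Real.sqrt (x / (x + 1/2))) atTop (nhds 1) := by
    have := (Real.continuous_sqrt.tendsto 1).comp h1
    simpa [Function.comp_def] using this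
  refine tendsto_of_tendsto_of_tendsto_of_le_of_le' hlow tendsto_const_nhds ?_ ?_
  · filter_upwards [eventually_gt_atTop (0:ℝ)] with x hx
    have hG : 0 < Real.Gamma x := Real.Gamma_pos_of_pos hx
    have hsx : 0 < Real.sqrt x := Real.sqrt_pos.mpr hx
    have hs2 : 0 < Real.sqrt (x + 1/2) := Real.sqrt_pos.mpr (by linarith)
    rw [Real.sqrt_div hx.le, div_le_div_iff₀ hs2 (by positivity)]
    have := gamma_half_lower hx
    calc Real.sqrt x * (Real.Gamma x * Real.sqrt x) = x * Real.Gamma x := by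
          rw [← mul_assoc, mul_comm (Real.sqrt x) (Real.Gamma x), mul_assoc,
            Real.mul_self_sqrt hx.le, mul_comm]
      _ ≤ Real.Gamma (x + 1/2) * Real.sqrt (x + 1/2) := this
  · filter_upwards [eventually_gt_atTop (0:ℝ)] with x hx
    have hG : 0 < Real.Gamma x := Real.Gamma_pos_of_pos hx
    have hsx : 0 < Real.sqrt x := Real.sqrt_pos.mpr hx
    rw [div_le_one (by positivity)]
    exact gamma_half_upper hx

/-- The normalizing constant of the standardized symmetric Beta density converges
to that of the standard Gaussian: `(8γn)^{-1/2} · 2^{-2a_n+2} / B(a_n,a_n) → (2π)^{-1/2}`,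
where `B(a,b) = Γ(a)Γ(b)/Γ(a+b)`. -/
theorem beta_normalizing_constant_tendsto_gaussian (a : ℕ → ℝ) (γ : ℝ) (hγ : 0 < γ)
    (ha : Tendsto a atTop atTop)
    (hlim : Tendsto (fun n : ℕ => a n / n) atTop (nhds γ)) :
    Tendsto (fun n : ℕ =>
        (8 * γ * n) ^ (-(1:ℝ)/2) * (2:ℝ) ^ (-2 * a n + 2) /
          (Real.Gamma (a n) * Real.Gamma (a n) / Real.Gamma (2 * a n)))
      atTop (nhds ((2 * Real.pi) ^ (-(1:ℝ)/2))) := by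
  have hπ : 0 < Real.pi := Real.pi_pos
  have hr : Tendsto (fun n => Real.Gamma (a n + 1/2) / (Real.Gamma (a n) * Real.sqrt (a n)))
      atTop (nhds 1) := gamma_ratio_tendsto.comp ha
  have hs : Tendsto (fun n : ℕ => Real.sqrt (a n / n)) atTop (nhds (Real.sqrt γ)) :=
    (Real.continuous_sqrt.tendsto γ).comp hlim
  have hmain : Tendsto (fun n : ℕ => 2 / (Real.sqrt π * Real.sqrt (8 * γ)) *
      (Real.Gamma (a n + 1/2) / (Real.Gamma (a n) * Real.sqrt (a n)) * Real.sqrt (a n / n)))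
      atTop (nhds (2 / (Real.sqrt π * Real.sqrt (8 * γ)) * (1 * Real.sqrt γ))) :=
    (hr.mul hs).const_mul _
  have hval : 2 / (Real.sqrt π * Real.sqrt (8 * γ)) * (1 * Real.sqrt γ)
      = (2 * π) ^ (-(1:ℝ)/2) := by
    have h8 : Real.sqrt (8 * γ) = 2 * Real.sqrt 2 * Real.sqrt γ := by
      rw [show (8:ℝ) * γ = 2^2 * (2 * γ) by ring, Real.sqrt_mul (by positivity),
        Real.sqrt_sq (by norm_num : (0:ℝ) ≤ 2), Real.sqrt_mul (by norm_num) γ]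
      ring
    have h2π : ((2 * π) ^ (-(1:ℝ)/2) : ℝ) = (Real.sqrt 2 * Real.sqrt π)⁻¹ := by
      rw [show (-(1:ℝ)/2) = -(1/2) by ring, Real.rpow_neg (by positivity),
        ← Real.sqrt_eq_rpow, Real.sqrt_mul (by norm_num) π]
    rw [h2π, h8]
    have h2 : Real.sqrt 2 * Real.sqrt 2 = 2 := Real.mul_self_sqrt (by norm_num)
    have hsγ : (0:ℝ) < Real.sqrt γ := Real.sqrt_pos.mpr hγ
    have hs2 : (0:ℝ) < Real.sqrt 2 := by positivity
    have hsπ : (0:ℝ) < Real.sqrt π := Real.sqrt_pos.mpr hπ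
    field_simp
  rw [← hval]
  refine hmain.congr' ?_
  filter_upwards [eventually_ge_atTop 1, ha.eventually (eventually_gt_atTop (0:ℝ))]
    with n hn hapos
  have hn0 : (0:ℝ) < (n:ℝ) := by exact_mod_cast hn
  have hG : 0 < Real.Gamma (a n) := Real.Gamma_pos_of_pos hapos
  have hGh : 0 < Real.Gamma (a n + 1/2) := Real.Gamma_pos_of_pos (by linarith)
  have hG2 : 0 < Real.Gamma (2 * a n) := Real.Gamma_pos_of_pos (by linarith)
  have hdup := Real.Gamma_mul_Gamma_add_half (a n)
  have hP : (0:ℝ) < (2:ℝ) ^ (1 - 2 * a n) := Real.rpow_pos_of_pos (by norm_num) _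
  have hpow : (2:ℝ) ^ (-2 * a n + 2) = (2:ℝ) ^ (1 - 2 * a n) * 2 := by
    rw [show (-2 * a n + 2) = (1 - 2 * a n) + 1 by ring,
      Real.rpow_add (by norm_num : (0:ℝ) < 2), Real.rpow_one]
  have hrpow : ((8 * γ * n : ℝ)) ^ (-(1:ℝ)/2) = (Real.sqrt (8 * γ) * Real.sqrt n)⁻¹ := by
    rw [show (-(1:ℝ)/2) = -(1/2) by ring, Real.rpow_neg (by positivity),
      ← Real.sqrt_eq_rpow, Real.sqrt_mul (by positivity) (n:ℝ)]
  have hsqrtdiv : Real.sqrt (a n / n) = Real.sqrt (a n) / Real.sqrt n :=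
    Real.sqrt_div hapos.le _
  have hsA : (0:ℝ) < Real.sqrt (a n) := Real.sqrt_pos.mpr hapos
  have hsn : (0:ℝ) < Real.sqrt n := Real.sqrt_pos.mpr hn0
  have hs8 : (0:ℝ) < Real.sqrt (8 * γ) := Real.sqrt_pos.mpr (by positivity)
  have hsπ : (0:ℝ) < Real.sqrt π := Real.sqrt_pos.mpr hπ
  have hG2eq : Real.Gamma (2 * a n) =
      Real.Gamma (a n) * Real.Gamma (a n + 1/2) / ((2:ℝ) ^ (1 - 2 * a n) * Real.sqrt π) := by
    field_simp at hdup ⊢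
    linarith [hdup]
  rw [hpow, hrpow, hsqrtdiv, hG2eq]
  field_simp
end

section
/- With V_n = ∏_{k=1}^n B(k,k) the volume of the scalar n-th moment space, one has log V_n / (-n² log 2) → 1 as n → ∞. -/
open Filter Finset

lemma cb_le_four_pow (n : ℕ) : Nat.centralBinom n ≤ 4 ^ n := by
  have h : Nat.centralBinom n ≤ ∑ m ∈ range (2 * n + 1), (2 * n).choose m := by
    exact Finset.single_le_sum (f := fun m => (2*n).choose m) (fun i _ => Nat.zero_le _)
      (by simp [Nat.lt_succ_iff]; omega)
  rw [Nat.sum_range_choose] at h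
  calc Nat.centralBinom n ≤ 2 ^ (2 * n) := h
    _ = 4 ^ n := by rw [pow_mul]; norm_num

lemma term_eq (k : ℕ) (hk : 1 ≤ k) :
    Real.Gamma k * Real.Gamma k / Real.Gamma (2 * k)
      = 2 / ((k : ℝ) * Nat.centralBinom k) := by
  obtain ⟨m, rfl⟩ : ∃ m, k = m + 1 := ⟨k - 1, by omega⟩
  have h1 : Real.Gamma ((m+1 : ℕ) : ℝ) = Nat.factorial m := by
    push_cast
    exact_mod_cast Real.Gamma_nat_eq_factorial m
  have h2 : Real.Gamma (2 * ((m+1 : ℕ) : ℝ)) = Nat.factorial (2*m+1) := by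
    have : 2 * ((m+1 : ℕ) : ℝ) = ((2*m+1 : ℕ) : ℝ) + 1 := by push_cast; ring
    rw [this]
    exact_mod_cast Real.Gamma_nat_eq_factorial (2*m+1)
  rw [h1, h2]
  have hnat := Nat.choose_mul_factorial_mul_factorial (show m+1 ≤ 2*(m+1) by omega)
  have h2m : 2*(m+1) - (m+1) = m+1 := by omega
  rw [h2m] at hnat
  have hcb : (Nat.centralBinom (m+1) : ℝ) * ((m:ℝ)+1) * (Nat.factorial m)
      * (((m:ℝ)+1) * (Nat.factorial m)) = (2*(m:ℝ)+2) * (Nat.factorial (2*m+1)) := by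
    have : ((2*(m+1)).choose (m+1) : ℝ) * (Nat.factorial (m+1)) * (Nat.factorial (m+1))
        = (Nat.factorial (2*(m+1))) := by exact_mod_cast congrArg Nat.cast hnat
    rw [Nat.centralBinom]
    rw [show (2*(m+1)) = (2*m+1)+1 by ring, Nat.factorial_succ, Nat.factorial_succ] at this
    push_cast at this ⊢
    rw [show 2*(m+1) = (2*m+1)+1 by ring]
    nlinarith [this]
  have hfpos : (0:ℝ) < Nat.factorial (2*m+1) := by exact_mod_cast Nat.factorial_pos _
  have hcbpos : (0:ℝ) < Nat.centralBinom (m+1) := by exact_mod_cast Nat.centralBinom_pos _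
  have hm1 : (0:ℝ) < (m:ℝ)+1 := by positivity
  field_simp
  push_cast
  nlinarith [hcb]

lemma term_pos (k : ℕ) (hk : 1 ≤ k) :
    0 < Real.Gamma k * Real.Gamma k / Real.Gamma (2 * k) := by
  rw [term_eq k hk]
  have : (0:ℝ) < (k : ℝ) * Nat.centralBinom k := by
    have := Nat.centralBinom_pos k
    positivity
  positivity

lemma log_term_bounds (k : ℕ) (hk : 1 ≤ k) :
    Real.log 2 - 2*k*Real.log 2 - Real.log k
      ≤ Real.log (Real.Gamma k * Real.Gamma k / Real.Gamma (2 * k)) ∧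
    Real.log (Real.Gamma k * Real.Gamma k / Real.Gamma (2 * k))
      ≤ 2*Real.log 2 - 2*k*Real.log 2 := by
  rw [term_eq k hk]
  have hkR : (1:ℝ) ≤ (k:ℝ) := by exact_mod_cast hk
  have hcb : (0:ℝ) < Nat.centralBinom k := by exact_mod_cast Nat.centralBinom_pos k
  have hx : (0:ℝ) < (k : ℝ) * Nat.centralBinom k := by positivity
  rw [Real.log_div (by norm_num) (ne_of_gt hx), Real.log_mul (by linarith) (ne_of_gt hcb)]
  have h4 : Real.log ((4:ℝ)^k) = 2*k*Real.log 2 := by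
    rw [Real.log_pow, show (4:ℝ) = 2^2 by norm_num, Real.log_pow]
    push_cast; ring
  constructor
  · -- need log k + log cb ≤ log k + 2k log 2, i.e. cb ≤ 4^k
    have : Real.log (Nat.centralBinom k) ≤ 2*k*Real.log 2 := by
      rw [← h4]
      apply Real.log_le_log hcb
      exact_mod_cast cb_le_four_pow k
    linarith
  · -- need 2k log2 - log 2 ≤ log k + log cb, i.e. 4^k ≤ 2 * (k * cb)
    have hle : (4:ℝ)^k ≤ 2 * ((k:ℝ) * Nat.centralBinom k) := by
      have := Nat.four_pow_le_two_mul_self_mul_centralBinom k hk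
      calc (4:ℝ)^k ≤ ((2 * k * Nat.centralBinom k : ℕ) : ℝ) := by exact_mod_cast this
        _ = 2 * ((k:ℝ) * Nat.centralBinom k) := by push_cast; ring
    have hlog : 2*k*Real.log 2 ≤ Real.log 2 + Real.log ((k:ℝ) * Nat.centralBinom k) := by
      rw [← h4, ← Real.log_mul (by norm_num) (ne_of_gt hx)]
      exact Real.log_le_log (by positivity) hle
    rw [Real.log_mul (by linarith) (ne_of_gt hcb)] at hlog
    linarith

lemma sum_Icc_id_real (n : ℕ) : ∑ k ∈ Finset.Icc 1 n, (k:ℝ) = n*(n+1)/2 := by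
  induction n with
  | zero => simp
  | succ m ih =>
    rw [Finset.sum_Icc_succ_top (by omega), ih]
    push_cast; ring

lemma sum_bounds (n : ℕ) :
    -(n:ℝ)^2 * Real.log 2 - n * Real.log n
      ≤ Real.log (∏ k ∈ Finset.Icc 1 n,
          Real.Gamma k * Real.Gamma k / Real.Gamma (2 * k)) ∧
    Real.log (∏ k ∈ Finset.Icc 1 n,
          Real.Gamma k * Real.Gamma k / Real.Gamma (2 * k))
      ≤ -(n:ℝ)^2 * Real.log 2 + n * Real.log 2 := by
  have hlog : Real.log (∏ k ∈ Finset.Icc 1 n,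
      Real.Gamma k * Real.Gamma k / Real.Gamma (2 * k))
      = ∑ k ∈ Finset.Icc 1 n, Real.log (Real.Gamma k * Real.Gamma k / Real.Gamma (2 * k)) := by
    apply Real.log_prod
    intro k hk
    exact ne_of_gt (term_pos k (Finset.mem_Icc.mp hk).1)
  rw [hlog]
  have hsumk := sum_Icc_id_real n
  have base : ∑ k ∈ Finset.Icc 1 n, (Real.log 2 - 2*(k:ℝ)*Real.log 2)
      = -(n:ℝ)^2 * Real.log 2 := by
    rw [Finset.sum_sub_distrib, Finset.sum_const, Nat.card_Icc]
    rw [show ∀ S : Finset ℕ, ∑ k ∈ S, 2*(k:ℝ)*Real.log 2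
        = (2*Real.log 2) * ∑ k ∈ S, (k:ℝ) by
      intro S; rw [Finset.mul_sum]; apply Finset.sum_congr rfl; intros; ring]
    rw [hsumk]
    simp
    ring
  constructor
  · calc -(n:ℝ)^2 * Real.log 2 - n * Real.log n
        ≤ ∑ k ∈ Finset.Icc 1 n, (Real.log 2 - 2*(k:ℝ)*Real.log 2 - Real.log k) := by
          rw [Finset.sum_sub_distrib, base]
          have : ∑ k ∈ Finset.Icc 1 n, Real.log (k:ℝ) ≤ n * Real.log n := by
            calc ∑ k ∈ Finset.Icc 1 n, Real.log (k:ℝ)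
                ≤ ∑ k ∈ Finset.Icc 1 n, Real.log (n:ℝ) := by
                  apply Finset.sum_le_sum
                  intro k hk
                  obtain ⟨h1, h2⟩ := Finset.mem_Icc.mp hk
                  exact Real.log_le_log (by exact_mod_cast h1) (by exact_mod_cast h2)
              _ = n * Real.log n := by rw [Finset.sum_const, Nat.card_Icc]; simp
          linarith
      _ ≤ ∑ k ∈ Finset.Icc 1 n, Real.log (Real.Gamma k * Real.Gamma k / Real.Gamma (2 * k)) := by
          apply Finset.sum_le_sum
          intro k hk
          exact (log_term_bounds k (Finset.mem_Icc.mp hk).1).1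
  · calc ∑ k ∈ Finset.Icc 1 n, Real.log (Real.Gamma k * Real.Gamma k / Real.Gamma (2 * k))
        ≤ ∑ k ∈ Finset.Icc 1 n, (2*Real.log 2 - 2*(k:ℝ)*Real.log 2) := by
          apply Finset.sum_le_sum
          intro k hk
          exact (log_term_bounds k (Finset.mem_Icc.mp hk).1).2
      _ = -(n:ℝ)^2 * Real.log 2 + n * Real.log 2 := by
          have : ∑ k ∈ Finset.Icc 1 n, (2*Real.log 2 - 2*(k:ℝ)*Real.log 2)
              = (∑ k ∈ Finset.Icc 1 n, (Real.log 2 - 2*(k:ℝ)*Real.log 2))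
                + ∑ k ∈ Finset.Icc 1 n, Real.log 2 := by
            rw [← Finset.sum_add_distrib]; apply Finset.sum_congr rfl; intros; ring
          rw [this, base, Finset.sum_const, Nat.card_Icc]
          simp

/-- With `V_n = ∏_{k=1}^n B(k,k)` the volume of the scalar `n`-th moment space,
`log V_n / (-n² log 2) → 1` as `n → ∞`. -/
theorem log_volume_momentSpace_asymptotics :
    Tendsto (fun n : ℕ =>
        Real.log (∏ k ∈ Finset.Icc 1 n,
            Real.Gamma k * Real.Gamma k / Real.Gamma (2 * k)) /
          (-(n : ℝ) ^ 2 * Real.log 2))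
      atTop (nhds 1) := by
  have hL2 : (0:ℝ) < Real.log 2 := Real.log_pos (by norm_num)
  have key : Tendsto (fun n : ℕ =>
      Real.log (∏ k ∈ Finset.Icc 1 n,
          Real.Gamma k * Real.Gamma k / Real.Gamma (2 * k)) /
        (-(n : ℝ) ^ 2 * Real.log 2) - 1) atTop (nhds 0) := by
    apply squeeze_zero_norm' (a := fun n : ℕ => (Real.log n + Real.log 2) / (n * Real.log 2))
    · filter_upwards [eventually_ge_atTop 1] with n hn
      have hnR : (1:ℝ) ≤ (n:ℝ) := by exact_mod_cast hn
      have hnpos : (0:ℝ) < n := by linarith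
      obtain ⟨hlo, hhi⟩ := sum_bounds n
      set S := Real.log (∏ k ∈ Finset.Icc 1 n,
          Real.Gamma k * Real.Gamma k / Real.Gamma (2 * k)) with hS
      have hpos2 : (0:ℝ) < (n:ℝ)^2 * Real.log 2 := by positivity
      have hden : -(n:ℝ)^2 * Real.log 2 ≠ 0 := by
        intro h; nlinarith
      have heq : S / (-(n:ℝ)^2 * Real.log 2) - 1
          = (S + (n:ℝ)^2 * Real.log 2) / (-(n:ℝ)^2 * Real.log 2) := by
        field_simp
        ring
      rw [heq, norm_div, Real.norm_eq_abs, Real.norm_eq_abs]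
      have habs_den : |(-(n:ℝ)^2 * Real.log 2)| = (n:ℝ)^2 * Real.log 2 := by
        rw [abs_of_nonpos (by nlinarith)]; ring
      rw [habs_den]
      have hlogn : 0 ≤ Real.log n := Real.log_nonneg hnR
      have habs_num : |S + (n:ℝ)^2 * Real.log 2| ≤ (n:ℝ) * (Real.log n + Real.log 2) := by
        rw [abs_le]
        constructor <;> nlinarith
      rw [div_le_div_iff₀ hpos2 (by positivity)]
      calc |S + (n:ℝ)^2 * Real.log 2| * ((n:ℝ) * Real.log 2)
          ≤ ((n:ℝ) * (Real.log n + Real.log 2)) * ((n:ℝ) * Real.log 2) := by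
            apply mul_le_mul_of_nonneg_right habs_num (by positivity)
        _ = (Real.log n + Real.log 2) * ((n:ℝ)^2 * Real.log 2) := by ring
    · have h1 : Tendsto (fun x : ℝ => (Real.log x + Real.log 2) / (x * Real.log 2))
          atTop (nhds 0) := by
        have := Real.tendsto_pow_log_div_mul_add_atTop (Real.log 2) 0 1 (ne_of_gt hL2)
        simp only [pow_one, add_zero] at this
        have h2 : Tendsto (fun x : ℝ => Real.log 2 / (Real.log 2 * x)) atTop (nhds 0) := by
          apply Tendsto.div_atTop tendsto_const_nhds
          exact Tendsto.const_mul_atTop hL2 tendsto_id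
        have h3 := (this.add h2).congr
          (fun x => by rw [← add_div, mul_comm (Real.log 2) x])
        simpa using h3
      exact h1.comp tendsto_natCast_atTop_atTop
  have := key.add (tendsto_const_nhds (x := (1:ℝ)))
  simpa using this
end

section
/- If μ is a matrix probability measure on [0,1] that is invariant under x ↦ 1 - x, then all odd-indexed canonical moments satisfy U_{2n-1} = (1/2) I_p whenever they are defined. -/
open MeasureTheory Matrix
open scoped NNReal ENNReal

/-- A (normalized, nonnegative definite, symmetric) `p×p` matrix measure
supported on the interval `[c,d]`, represented by a finite nonnegative base
measure together with a symmetric positive semidefinite matrix density. -/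
structure MatMeas (p : ℕ) (c d : ℝ) where
  base : Measure ℝ
  dens : ℝ → Matrix (Fin p) (Fin p) ℝ
  finite : IsFiniteMeasure base
  supp : base (Set.Icc c d)ᶜ = 0
  symm : ∀ x, (dens x).IsSymm
  psd : ∀ x, (dens x).PosSemidef
  integrable : ∀ i j, Integrable (fun x => dens x i j) base
  normalized : ∀ i j, (∫ x, dens x i j ∂base) = (1 : Matrix (Fin p) (Fin p) ℝ) i j

/-- The `k`-th (matrix) moment `S_k = ∫ x^k dμ(x)` of a matrix measure. -/
noncomputable def mmoment {p : ℕ} {c d : ℝ} (μ : MatMeas p c d) (k : ℕ) :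
    Matrix (Fin p) (Fin p) ℝ :=
  Matrix.of fun i j => ∫ x, x ^ k * μ.dens x i j ∂μ.base

/-- The matrix `μ(A)` assigned to a Borel set by a matrix measure. -/
noncomputable def mmOf {p : ℕ} {c d : ℝ} (μ : MatMeas p c d) (A : Set ℝ) :
    Matrix (Fin p) (Fin p) ℝ :=
  Matrix.of fun i j => ∫ x in A, μ.dens x i j ∂μ.base

/-- The set of possible `k`-th moments of matrix measures on `[c,d]` whose
moments of order `1,…,k-1` are prescribed by `S`. -/
def kthMomentSet (p : ℕ) (c d : ℝ) (k : ℕ) (S : ℕ → Matrix (Fin p) (Fin p) ℝ) :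
    Set (Matrix (Fin p) (Fin p) ℝ) :=
  { T | ∃ ν : MatMeas p c d, (∀ j, 1 ≤ j → j < k → mmoment ν j = S j) ∧ mmoment ν k = T }

variable {p : ℕ}

lemma ae_mem (μ : MatMeas p 0 1) : ∀ᵐ x ∂μ.base, x ∈ Set.Icc (0:ℝ) 1 := by
  have : μ.base {x | ¬ x ∈ Set.Icc (0:ℝ) 1} = 0 := μ.supp
  exact (ae_iff).2 this

lemma integrable_mul (μ : MatMeas p 0 1) {g : ℝ → ℝ} (hg : Measurable g)
    (hb : ∀ x ∈ Set.Icc (0:ℝ) 1, |g x| ≤ 1) (i j : Fin p) :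
    Integrable (fun x => g x * μ.dens x i j) μ.base := by
  refine Integrable.mono' ((μ.integrable i j).abs) ?_ ?_
  · exact (hg.aestronglyMeasurable.mul (μ.integrable i j).aestronglyMeasurable)
  · filter_upwards [ae_mem μ] with x hx
    have : ‖g x * μ.dens x i j‖ = |g x| * |μ.dens x i j| := abs_mul _ _
    rw [this]
    calc |g x| * |μ.dens x i j| ≤ 1 * |μ.dens x i j| :=
          mul_le_mul_of_nonneg_right (hb x hx) (abs_nonneg _)
      _ = |μ.dens x i j| := one_mul _

noncomputable def rE : ℝ ≃ᵐ ℝ where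
  toEquiv := { toFun := fun x : ℝ => 1 - x, invFun := fun x : ℝ => 1 - x,
               left_inv := fun x => by ring, right_inv := fun x => by ring }
  measurable_toFun := measurable_const.sub measurable_id
  measurable_invFun := measurable_const.sub measurable_id

lemma rE_coe : ⇑rE = fun x : ℝ => 1 - x := rfl

/-- quadratic form -/
noncomputable def qf (μ : MatMeas p 0 1) (v : Fin p → ℝ) (x : ℝ) : ℝ :=
  ∑ a, ∑ b, v a * μ.dens x a b * v b

lemma qf_nonneg (μ : MatMeas p 0 1) (v : Fin p → ℝ) (x : ℝ) : 0 ≤ qf μ v x := by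
  have h := (μ.psd x).dotProduct_mulVec_nonneg v
  have : star v ⬝ᵥ μ.dens x *ᵥ v = qf μ v x := by
    simp [qf, dotProduct, mulVec, Finset.mul_sum, mul_assoc]
  rwa [this] at h

lemma qf_integrable (μ : MatMeas p 0 1) (v : Fin p → ℝ) :
    Integrable (qf μ v) μ.base := by
  apply integrable_finset_sum
  intro a _
  apply integrable_finset_sum
  intro b _
  exact ((μ.integrable a b).const_mul (v a)).mul_const (v b)

lemma qf_setIntegral (μ : MatMeas p 0 1) (v : Fin p → ℝ) (B : Set ℝ) :
    ∫ x in B, qf μ v x ∂μ.base = ∑ a, ∑ b, v a * (mmOf μ B a b) * v b := by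
  unfold qf
  rw [integral_finset_sum _ (fun a _ => (integrable_finset_sum _ (fun b _ =>
    ((μ.integrable a b).const_mul (v a)).mul_const (v b))).integrableOn)]
  refine Finset.sum_congr rfl fun a _ => ?_
  rw [integral_finset_sum _ (fun b _ =>
    (((μ.integrable a b).const_mul (v a)).mul_const (v b)).integrableOn)]
  refine Finset.sum_congr rfl fun b _ => ?_
  rw [integral_mul_const, MeasureTheory.integral_const_mul]
  rfl

lemma qf_sym_integral (μ : MatMeas p 0 1)
    (hsymm : ∀ A : Set ℝ, MeasurableSet A →
      mmOf μ ((fun x : ℝ => 1 - x) ⁻¹' A) = mmOf μ A)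
    (v : Fin p → ℝ) (g : ℝ → ℝ) (hg : Measurable g) :
    ∫ x, qf μ v x * g (1 - x) ∂μ.base = ∫ x, qf μ v x * g x ∂μ.base := by
  set f := qf μ v with hf
  have hr : Measurable (fun x : ℝ => 1 - x) := measurable_const.sub measurable_id
  have hfae : AEMeasurable f μ.base := (qf_integrable μ v).aestronglyMeasurable.aemeasurable
  set fN : ℝ → ℝ≥0 := fun x => Real.toNNReal (f x) with hfN
  have hfNae : AEMeasurable fN μ.base := hfae.real_toNNReal
  set m : Measure ℝ := μ.base.withDensity (fun x => (fN x : ℝ≥0∞)) with hm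
  have hsetB : ∀ B : Set ℝ, MeasurableSet B →
      m B = ENNReal.ofReal (∫ x in B, f x ∂μ.base) := by
    intro B hB
    rw [hm, withDensity_apply _ hB]
    have hcoe : ∀ a, ((fN a : ℝ≥0∞)) = ENNReal.ofReal (f a) := fun a => rfl
    simp only [hcoe]
    rw [← ofReal_integral_eq_lintegral_ofReal (qf_integrable μ v).integrableOn
        (Filter.Eventually.of_forall fun x => qf_nonneg μ v x)]
  have hinv : Measure.map (fun x : ℝ => 1 - x) m = m := by
    ext A hA
    rw [Measure.map_apply hr hA, hsetB _ (hr hA), hsetB _ hA]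
    congr 1
    rw [qf_setIntegral, qf_setIntegral, hsymm A hA]
  have hgm : ∫ x, g x ∂m = ∫ x, g (1 - x) ∂m := by
    conv_lhs => rw [← hinv, ← rE_coe, MeasureTheory.integral_map_equiv rE g]
    rfl
  have hsm : ∀ h : ℝ → ℝ, ∫ x, h x ∂m = ∫ x, f x * h x ∂μ.base := by
    intro h
    rw [hm, integral_withDensity_eq_integral_smul₀ hfNae h]
    refine integral_congr_ae (Filter.Eventually.of_forall fun x => ?_)
    simp [hfN, NNReal.smul_def, Real.coe_toNNReal _ (qf_nonneg μ v x)]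
    exact Or.inl (qf_nonneg μ v x)
  rw [hsm, hsm] at hgm
  exact hgm.symm

lemma qf_single (μ : MatMeas p 0 1) (i : Fin p) (x : ℝ) :
    qf μ (Pi.single i 1) x = μ.dens x i i := by
  simp [qf, Pi.single_apply, ite_mul, mul_ite, Finset.sum_ite_eq']

lemma qf_pair (μ : MatMeas p 0 1) (i j : Fin p) (x : ℝ) :
    qf μ (Pi.single i 1 + Pi.single j 1) x
      = μ.dens x i i + μ.dens x j j + 2 * μ.dens x i j := by
  simp [qf, Pi.single_apply, ite_mul, mul_ite, add_mul, mul_add, Finset.sum_add_distrib,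
    Finset.sum_ite_eq', (μ.symm x).apply i j]
  ring

lemma entry_sym_integral (μ : MatMeas p 0 1)
    (hsymm : ∀ A : Set ℝ, MeasurableSet A →
      mmOf μ ((fun x : ℝ => 1 - x) ⁻¹' A) = mmOf μ A)
    {g : ℝ → ℝ} (hg : Measurable g)
    (hb : ∀ x ∈ Set.Icc (0:ℝ) 1, |g x| ≤ 1) (i j : Fin p) :
    ∫ x, g (1 - x) * μ.dens x i j ∂μ.base = ∫ x, g x * μ.dens x i j ∂μ.base := by
  have hb' : ∀ x ∈ Set.Icc (0:ℝ) 1, |g (1 - x)| ≤ 1 := fun x hx =>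
    hb (1 - x) ⟨by linarith [hx.2], by linarith [hx.1]⟩
  have hg' : Measurable (fun x : ℝ => g (1 - x)) := hg.comp (measurable_const.sub measurable_id)
  -- expand the three quadratic-form identities
  have key : ∀ (h : ℝ → ℝ), Measurable h → (∀ x ∈ Set.Icc (0:ℝ) 1, |h x| ≤ 1) →
      ∫ x, qf μ (Pi.single i 1 + Pi.single j 1) x * h x ∂μ.base
        = (∫ x, h x * μ.dens x i i ∂μ.base) + (∫ x, h x * μ.dens x j j ∂μ.base)
          + 2 * ∫ x, h x * μ.dens x i j ∂μ.base := by
    intro h hh hhb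
    have e1 : (fun x => qf μ (Pi.single i 1 + Pi.single j 1) x * h x)
        = fun x => h x * μ.dens x i i + h x * μ.dens x j j + 2 * (h x * μ.dens x i j) := by
      funext x; rw [qf_pair]; ring
    have hI12 : Integrable (fun x => h x * μ.dens x i i + h x * μ.dens x j j) μ.base :=
      (integrable_mul μ hh hhb i i).add (integrable_mul μ hh hhb j j)
    rw [e1, integral_add hI12 ((integrable_mul μ hh hhb i j).const_mul 2),
      integral_add (integrable_mul μ hh hhb i i) (integrable_mul μ hh hhb j j),
      MeasureTheory.integral_const_mul]
  have h1 := qf_sym_integral μ hsymm (Pi.single i 1 + Pi.single j 1) g hg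
  have h2 := qf_sym_integral μ hsymm (Pi.single i 1) g hg
  have h3 := qf_sym_integral μ hsymm (Pi.single j 1) g hg
  simp only [qf_single] at h2 h3
  have c2 : ∫ x, g (1 - x) * μ.dens x i i ∂μ.base = ∫ x, g x * μ.dens x i i ∂μ.base := by
    have := h2
    simpa [mul_comm] using this
  have c3 : ∫ x, g (1 - x) * μ.dens x j j ∂μ.base = ∫ x, g x * μ.dens x j j ∂μ.base := by
    simpa [mul_comm] using h3
  have hL := key _ hg' hb'
  have hR := key _ hg hb
  rw [hL, hR, c2, c3] at h1
  have := add_left_cancel (add_left_cancel (by linarith [h1] : 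
    (∫ x, g x * μ.dens x i i ∂μ.base) + ((∫ x, g x * μ.dens x j j ∂μ.base) +
      2 * ∫ x, g (1-x) * μ.dens x i j ∂μ.base)
    = (∫ x, g x * μ.dens x i i ∂μ.base) + ((∫ x, g x * μ.dens x j j ∂μ.base) +
      2 * ∫ x, g x * μ.dens x i j ∂μ.base)))
  linarith [this]

lemma pow_bound : ∀ (k : ℕ), ∀ x ∈ Set.Icc (0:ℝ) 1, |x ^ k| ≤ 1 := by
  intro k x hx
  rw [abs_pow]
  exact pow_le_one₀ (abs_nonneg x) (abs_le.2 ⟨by linarith [hx.1], hx.2⟩)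

lemma integrable_pow (ν : MatMeas p 0 1) (k : ℕ) (i j : Fin p) :
    Integrable (fun x => x ^ k * ν.dens x i j) ν.base :=
  integrable_mul ν (measurable_id.pow_const k) (pow_bound k) i j

lemma mmoment_zero (ν : MatMeas p 0 1) : mmoment ν 0 = 1 := by
  ext i j
  simp only [mmoment, Matrix.of_apply, pow_zero, one_mul]
  exact ν.normalized i j

noncomputable def reflect (μ : MatMeas p 0 1) : MatMeas p 0 1 where
  base := Measure.map (fun x : ℝ => 1 - x) μ.base
  dens := fun x => μ.dens (1 - x)
  finite := by
    haveI := μ.finite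
    exact inferInstance
  supp := by
    have hr : Measurable (fun x : ℝ => 1 - x) := measurable_const.sub measurable_id
    rw [Measure.map_apply hr measurableSet_Icc.compl]
    have hpre : (fun x : ℝ => 1 - x) ⁻¹' (Set.Icc 0 1) = Set.Icc 0 1 := by
      ext x
      simp only [Set.mem_preimage, Set.mem_Icc]
      constructor <;> rintro ⟨h1, h2⟩ <;> constructor <;> linarith
    rw [Set.preimage_compl, hpre]
    exact μ.supp
  symm := fun x => μ.symm _
  psd := fun x => μ.psd _
  integrable := fun i j => by
    rw [show (fun x : ℝ => 1 - x) = ⇑rE from rfl, integrable_map_equiv]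
    have : ((fun x => μ.dens (1 - x) i j) ∘ ⇑rE) = fun x => μ.dens x i j := by
      funext x
      show μ.dens (1 - (1 - x)) i j = _
      norm_num
    rw [this]
    exact μ.integrable i j
  normalized := fun i j => by
    rw [show (fun x : ℝ => 1 - x) = ⇑rE from rfl, MeasureTheory.integral_map_equiv]
    have : (fun x => μ.dens (1 - rE x) i j) = fun x => μ.dens x i j := by
      funext x
      show μ.dens (1 - (1 - x)) i j = _
      norm_num
    rw [show (fun x => μ.dens (1 - (rE x)) i j) = fun x => μ.dens x i j from this]
    exact μ.normalized i j

lemma reflect_mmoment_apply (μ : MatMeas p 0 1) (k : ℕ) (a b : Fin p) :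
    mmoment (reflect μ) k a b = ∫ x, (1 - x) ^ k * μ.dens x a b ∂μ.base := by
  show (∫ x, x ^ k * μ.dens (1 - x) a b ∂(Measure.map (fun x : ℝ => 1 - x) μ.base)) = _
  rw [show (fun x : ℝ => 1 - x) = ⇑rE from rfl, MeasureTheory.integral_map_equiv]
  congr 1
  funext x
  show (1 - x) ^ k * μ.dens (1 - (1 - x)) a b = _
  norm_num

lemma one_sub_pow_expand (k : ℕ) (x : ℝ) :
    (1 - x) ^ k = ∑ i ∈ Finset.range (k + 1), ((-1 : ℝ) ^ i * (k.choose i)) * x ^ i := by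
  rw [show (1 - x : ℝ) = -x + 1 by ring, add_pow]
  refine Finset.sum_congr rfl fun i _ => ?_
  rw [neg_pow]
  ring

lemma reflect_mmoment (μ : MatMeas p 0 1) (k : ℕ) :
    mmoment (reflect μ) k
      = ∑ i ∈ Finset.range (k + 1), ((-1 : ℝ) ^ i * (k.choose i)) • mmoment μ i := by
  ext a b
  rw [reflect_mmoment_apply]
  have e1 : (fun x => (1 - x) ^ k * μ.dens x a b)
      = fun x => ∑ i ∈ Finset.range (k + 1),
          ((-1 : ℝ) ^ i * (k.choose i)) * (x ^ i * μ.dens x a b) := by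
    funext x
    rw [one_sub_pow_expand, Finset.sum_mul]
    exact Finset.sum_congr rfl fun i _ => by ring
  rw [e1, integral_finset_sum _ (fun i _ => (integrable_pow μ i a b).const_mul _)]
  have e2 : (∑ i ∈ Finset.range (k + 1), ((-1 : ℝ) ^ i * (k.choose i)) • mmoment μ i) a b
      = ∑ i ∈ Finset.range (k + 1), ((-1 : ℝ) ^ i * (k.choose i)) * (mmoment μ i a b) := by
    rw [Matrix.sum_apply]
    exact Finset.sum_congr rfl fun i _ => rfl
  rw [e2]
  exact Finset.sum_congr rfl fun i _ => by rw [MeasureTheory.integral_const_mul]; rfl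

lemma mmoment_reflect_eq (μ : MatMeas p 0 1)
    (hsymm : ∀ A : Set ℝ, MeasurableSet A →
      mmOf μ ((fun x : ℝ => 1 - x) ⁻¹' A) = mmOf μ A) (k : ℕ) :
    mmoment (reflect μ) k = mmoment μ k := by
  ext a b
  rw [reflect_mmoment_apply]
  exact entry_sym_integral μ hsymm (measurable_id.pow_const k) (pow_bound k) a b

/-- the key combinatorial identity for a symmetric measure -/
lemma sum_binom_eq (μ : MatMeas p 0 1)
    (hsymm : ∀ A : Set ℝ, MeasurableSet A →
      mmOf μ ((fun x : ℝ => 1 - x) ⁻¹' A) = mmOf μ A) (k : ℕ) :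
    ∑ i ∈ Finset.range (k + 1), ((-1 : ℝ) ^ i * (k.choose i)) • mmoment μ i = mmoment μ k := by
  rw [← reflect_mmoment, mmoment_reflect_eq μ hsymm]

lemma quad_expand (M : Matrix (Fin p) (Fin p) ℝ) (v : Fin p → ℝ) :
    star v ⬝ᵥ M *ᵥ v = ∑ a, ∑ b, v a * M a b * v b := by
  simp [dotProduct, mulVec, Finset.mul_sum, mul_assoc]

lemma psd_neg_eq_zero {M : Matrix (Fin p) (Fin p) ℝ} (h1 : M.PosSemidef)
    (h2 : (-M).PosSemidef) : M = 0 := by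
  have hs : ∀ a b, M b a = M a b := by
    intro a b
    have := h1.1
    have h := congrFun (congrFun this.symm a) b
    simpa [Matrix.conjTranspose_apply] using h.symm
  have hq : ∀ v : Fin p → ℝ, ∑ a, ∑ b, v a * M a b * v b = 0 := by
    intro v
    have ha := h1.dotProduct_mulVec_nonneg v
    have hb := h2.dotProduct_mulVec_nonneg v
    rw [quad_expand] at ha
    rw [quad_expand] at hb
    have : ∑ a, ∑ b, v a * (-M) a b * v b = -∑ a, ∑ b, v a * M a b * v b := by
      rw [← Finset.sum_neg_distrib]
      refine Finset.sum_congr rfl fun a _ => ?_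
      rw [← Finset.sum_neg_distrib]
      refine Finset.sum_congr rfl fun b _ => ?_
      simp
    rw [this] at hb
    linarith
  ext i j
  have hii := hq (Pi.single i 1)
  have hjj := hq (Pi.single j 1)
  have hij := hq (Pi.single i 1 + Pi.single j 1)
  have eii : ∑ a : Fin p, ∑ b : Fin p, (Pi.single i 1 : Fin p → ℝ) a * M a b * (Pi.single i 1 : Fin p → ℝ) b = M i i := by
    simp [Pi.single_apply, ite_mul, mul_ite, Finset.sum_ite_eq']
  have ejj : ∑ a : Fin p, ∑ b : Fin p, (Pi.single j 1 : Fin p → ℝ) a * M a b * (Pi.single j 1 : Fin p → ℝ) b = M j j := by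
    simp [Pi.single_apply, ite_mul, mul_ite, Finset.sum_ite_eq']
  have eij : ∑ a : Fin p, ∑ b : Fin p, (Pi.single i 1 + Pi.single j 1 : Fin p → ℝ) a * M a b *
      ((Pi.single i 1 + Pi.single j 1 : Fin p → ℝ) b) = M i i + M j j + 2 * M i j := by
    simp [Pi.single_apply, ite_mul, mul_ite, add_mul, mul_add, Finset.sum_add_distrib,
      Finset.sum_ite_eq', hs i j]
    ring
  rw [eii] at hii
  rw [ejj] at hjj
  rw [eij] at hij
  have : M i j = 0 := by linarith
  simpa using this


/-- If a matrix probability measure `μ` on `[0,1]` is invariant under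
`x ↦ 1 - x`, then the odd canonical moments satisfy `U_{2n-1} = (1/2) I_p`
whenever they are defined.  Here `Smin`/`Smax` are the minimal/maximal possible
`(2n-1)`-st moments (w.r.t. the Loewner order) given the previous moments of
`μ`, `U` is defined whenever `Smax - Smin` is positive definite, and `R` is the
symmetric positive definite square root of `Smax - Smin`, so that the
conclusion states `(S⁺-S⁻)^{-1/2} (S_{2n-1} - S⁻) (S⁺-S⁻)^{-1/2} = (1/2) I_p`. -/
theorem odd_canonical_moment_of_symmetric (p n : ℕ) (hp : 0 < p) (hn : 1 ≤ n)
    (μ : MatMeas p 0 1)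
    (hsymm : ∀ A : Set ℝ, MeasurableSet A →
      mmOf μ ((fun x : ℝ => 1 - x) ⁻¹' A) = mmOf μ A)
    (Smin Smax : Matrix (Fin p) (Fin p) ℝ)
    (hminMem : Smin ∈ kthMomentSet p 0 1 (2 * n - 1) (fun j => mmoment μ j))
    (hminLe : ∀ T ∈ kthMomentSet p 0 1 (2 * n - 1) (fun j => mmoment μ j),
      (T - Smin).PosSemidef)
    (hmaxMem : Smax ∈ kthMomentSet p 0 1 (2 * n - 1) (fun j => mmoment μ j))
    (hmaxGe : ∀ T ∈ kthMomentSet p 0 1 (2 * n - 1) (fun j => mmoment μ j),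
      (Smax - T).PosSemidef)
    (hD : (Smax - Smin).PosDef)
    (R : Matrix (Fin p) (Fin p) ℝ) (hRsymm : R.IsSymm) (hRpd : R.PosDef)
    (hRR : R * R = Smax - Smin) :
    R⁻¹ * (mmoment μ (2 * n - 1) - Smin) * R⁻¹ =
      (1 / 2 : ℝ) • (1 : Matrix (Fin p) (Fin p) ℝ) := by
  set k := 2 * n - 1 with hk
  have hodd : Odd k := ⟨n - 1, by omega⟩
  have hck : ((-1 : ℝ) ^ k * (k.choose k : ℝ)) = -1 := by
    rw [Nat.choose_self, hodd.neg_one_pow]; norm_num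
  set S := mmoment μ k with hS
  set B := ∑ i ∈ Finset.range k, ((-1 : ℝ) ^ i * (k.choose i : ℝ)) • mmoment μ i with hB
  have hsum := sum_binom_eq μ hsymm k
  rw [Finset.sum_range_succ, hck, neg_one_smul, ← hS, ← hB] at hsum
  have hBS : B = S + S := by
    calc B = (B + -S) + S := by abel
    _ = S + S := by rw [hsum]
  have hrefl : ∀ T ∈ kthMomentSet p 0 1 k (fun j => mmoment μ j),
      B + -T ∈ kthMomentSet p 0 1 k (fun j => mmoment μ j) := by
    rintro T ⟨ν, hlow, hT⟩
    have hlow' : ∀ i < k, mmoment ν i = mmoment μ i := by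
      intro i hi
      rcases Nat.eq_zero_or_pos i with h0 | h1
      · subst h0; rw [mmoment_zero, mmoment_zero]
      · exact hlow i h1 hi
    refine ⟨reflect ν, ?_, ?_⟩
    · intro j hj1 hjk
      rw [reflect_mmoment]
      have e : ∑ i ∈ Finset.range (j + 1), ((-1 : ℝ) ^ i * (j.choose i : ℝ)) • mmoment ν i
           = ∑ i ∈ Finset.range (j + 1), ((-1 : ℝ) ^ i * (j.choose i : ℝ)) • mmoment μ i :=
        Finset.sum_congr rfl fun i hi => by
          have hik : i < k := by have := Finset.mem_range.1 hi; omega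
          rw [hlow' i hik]
      rw [e, sum_binom_eq μ hsymm j]
    · rw [reflect_mmoment, Finset.sum_range_succ]
      have h1 : ∑ i ∈ Finset.range k, ((-1 : ℝ) ^ i * (k.choose i : ℝ)) • mmoment ν i = B := by
        rw [hB]
        exact Finset.sum_congr rfl fun i hi => by rw [hlow' i (Finset.mem_range.1 hi)]
      rw [h1, hck, neg_one_smul, hT]
  have hT2 := hrefl Smax hmaxMem
  have hT1 := hrefl Smin hminMem
  have hp1 := hminLe _ hT2
  have hp2 := hmaxGe _ hT1
  have hXzero : Smax - (B + -Smin) = -(B + -Smax - Smin) := by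
    ext i j
    simp [Matrix.sub_apply, Matrix.add_apply, Matrix.neg_apply]
    ring
  rw [hXzero] at hp2
  have h0 : B + -Smax - Smin = 0 := psd_neg_eq_zero hp1 hp2
  have hBsum : S + S = Smax + Smin := by
    rw [← hBS]
    calc B = (B + -Smax - Smin) + (Smax + Smin) := by abel
    _ = Smax + Smin := by rw [h0, zero_add]
  have hhalf : S - Smin = (1 / 2 : ℝ) • (R * R) := by
    rw [hRR]
    ext i j
    have h := congrFun (congrFun hBsum i) j
    simp only [Matrix.sub_apply, Matrix.smul_apply, Matrix.add_apply, smul_eq_mul] at h ⊢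
    linarith
  have hdet : IsUnit R.det := isUnit_iff_ne_zero.2 hRpd.det_pos.ne'
  rw [hhalf, Matrix.mul_smul, Matrix.smul_mul]
  congr 1
  calc R⁻¹ * (R * R) * R⁻¹ = (R⁻¹ * R) * (R * R⁻¹) := by
        rw [← mul_assoc, ← mul_assoc, mul_assoc (R⁻¹ * R)]
  _ = 1 := by rw [Matrix.nonsing_inv_mul R hdet, Matrix.mul_nonsing_inv R hdet, one_mul]
end

section
/- If σ is the symmetric matrix measure on [-1,1] induced from a matrix measure μ on [0,1] via σ([-x,x]) = μ([0,x²]), then the moments satisfy S^σ_{2n} = S^μ_n and S^σ_{2n-1} = 0, and the canonical moments satisfy U^σ_{2n-1} = (1/2) I_p and U^σ_{2n} = U^μ_n, whenever defined. -/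
open MeasureTheory Matrix

namespace CMHelp

open Set
open scoped ENNReal NNReal

variable {p : ℕ}

abbrev Mat (p : ℕ) := Matrix (Fin p) (Fin p) ℝ

/-- quadratic form of a real matrix -/
def qf (M : Mat p) (v : Fin p → ℝ) : ℝ := v ⬝ᵥ M *ᵥ v

lemma qf_nonneg {M : Mat p} (hM : M.PosSemidef) (v : Fin p → ℝ) : 0 ≤ qf M v := by
  have := hM.dotProduct_mulVec_nonneg v
  simpa [qf] using this

lemma qf_polar {M : Mat p} (hM : M.IsSymm) (i j : Fin p) :
    qf M (Pi.single i 1 + Pi.single j 1) - qf M (Pi.single i 1 - Pi.single j 1)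
      = 4 * M i j := by
  have hji : M j i = M i j := by
    conv_lhs => rw [← hM]
    rfl
  simp [qf, Matrix.mulVec_add, Matrix.mulVec_sub, dotProduct_add, dotProduct_sub,
    add_dotProduct, sub_dotProduct, Matrix.mulVec_single, single_dotProduct, hji]
  ring

lemma qf_sum (M : Mat p) (v : Fin p → ℝ) :
    qf M v = ∑ k, ∑ l, v k * (M k l * v l) := by
  simp [qf, dotProduct, Matrix.mulVec, Finset.mul_sum]

lemma psd_eq_zero {A : Mat p} (h1 : A.PosSemidef) (h2 : (-A).PosSemidef) : A = 0 := by
  have hq : ∀ v, qf A v = 0 := by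
    intro v
    have h2' := qf_nonneg h2 v
    have : qf (-A) v = - qf A v := by simp [qf, Matrix.neg_mulVec]
    rw [this] at h2'
    linarith [qf_nonneg h1 v]
  have hsymm : A.IsSymm := by
    have := h1.1
    ext i j
    have : Aᴴ = A := h1.1
    calc Aᵀ i j = Aᴴ i j := by simp [Matrix.conjTranspose_apply, Matrix.transpose_apply]
    _ = A i j := by rw [this]
  ext i j
  have := qf_polar hsymm i j
  rw [hq, hq] at this
  simp only [Matrix.zero_apply]
  linarith

lemma integral_qf {b : Measure ℝ} (D : ℝ → Mat p)
    (hInt : ∀ i j, Integrable (fun x => D x i j) b) (v : Fin p → ℝ) :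
    ∫ x, qf (D x) v ∂b = qf (Matrix.of fun i j => ∫ x, D x i j ∂b) v := by
  simp only [qf_sum, Matrix.of_apply]
  rw [integral_finset_sum]
  · refine Finset.sum_congr rfl fun k _ => ?_
    rw [integral_finset_sum]
    · refine Finset.sum_congr rfl fun l _ => ?_
      rw [integral_const_mul, integral_mul_const]
    · intro l _
      exact ((hInt k l).mul_const _).const_mul _
  · intro k _
    exact integrable_finset_sum _ fun l _ => ((hInt k l).mul_const _).const_mul _

lemma ae_mem_Icc {c d : ℝ} (ν : MatMeas p c d) : ∀ᵐ x ∂ν.base, x ∈ Set.Icc c d := by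
  rw [ae_iff]
  convert ν.supp using 2
  rfl

lemma integrable_pow_mul {c d : ℝ} (hc : -1 ≤ c) (hd : d ≤ 1) (ν : MatMeas p c d) (k : ℕ)
    {f : ℝ → ℝ} (hf : Integrable f ν.base) :
    Integrable (fun x => x ^ k * f x) ν.base := by
  refine Integrable.mono' hf.abs ((measurable_id.pow_const k).aestronglyMeasurable.mul hf.1) ?_
  filter_upwards [ae_mem_Icc ν] with x hx
  have hx1 : |x| ≤ 1 := by
    rw [abs_le]; exact ⟨le_trans hc hx.1, le_trans hx.2 hd⟩
  have : |x ^ k| ≤ 1 := by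
    rw [abs_pow]
    exact pow_le_one₀ (abs_nonneg x) hx1
  calc |x ^ k * f x| = |x ^ k| * |f x| := abs_mul _ _
  _ ≤ 1 * |f x| := mul_le_mul_of_nonneg_right this (abs_nonneg _)
  _ = |f x| := one_mul _

lemma integrable_qf {c d : ℝ} (ν : MatMeas p c d) (v : Fin p → ℝ) :
    Integrable (fun x => qf (ν.dens x) v) ν.base := by
  simp only [qf_sum]
  exact integrable_finset_sum _ fun k _ => integrable_finset_sum _ fun l _ =>
    ((ν.integrable k l).mul_const _).const_mul _

lemma exists_measDens {c d : ℝ} (ν : MatMeas p c d) :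
    ∃ D : ℝ → Mat p, (∀ i j, Measurable fun x => D x i j) ∧ (∀ x, (D x).IsSymm) ∧
      (∀ x, (D x).PosSemidef) ∧ (∀ᵐ x ∂ν.base, D x = ν.dens x) := by
  have hmk : ∀ i j : Fin p, ∃ g : ℝ → ℝ, Measurable g ∧ (∀ᵐ x ∂ν.base, ν.dens x i j = g x) := by
    intro i j
    exact ⟨(ν.integrable i j).1.mk _, (ν.integrable i j).1.measurable_mk,
      (ν.integrable i j).1.ae_eq_mk⟩
  choose g hgm hgae using hmk
  have hae : ∀ᵐ x ∂ν.base, ∀ i j, ν.dens x i j = g i j x := by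
    rw [ae_all_iff]; intro i; rw [ae_all_iff]; intro j; exact hgae i j
  set N := toMeasurable ν.base {x | ¬ ∀ i j, ν.dens x i j = g i j x} with hN
  have hNmeas : MeasurableSet N := measurableSet_toMeasurable _ _
  have hNnull : ν.base N = 0 := by
    rw [hN, measure_toMeasurable]
    exact hae
  have hsub : {x | ¬ ∀ i j, ν.dens x i j = g i j x} ⊆ N := subset_toMeasurable _ _
  classical
  refine ⟨fun x => if x ∈ N then 0 else ν.dens x, ?_, ?_, ?_, ?_⟩
  · intro i j
    have : (fun x => (if x ∈ N then 0 else ν.dens x) i j)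
        = fun x => if x ∈ N then 0 else g i j x := by
      funext x
      by_cases hx : x ∈ N
      · simp [hx]
      · have : ∀ i j, ν.dens x i j = g i j x := by
          by_contra hcon; exact hx (hsub hcon)
        simp [hx, this i j]
    rw [this]
    exact Measurable.ite hNmeas measurable_const (hgm i j)
  · intro x
    by_cases hx : x ∈ N
    · simp [hx, Matrix.IsSymm]
    · simpa [hx] using ν.symm x
  · intro x
    by_cases hx : x ∈ N
    · simpa [hx] using Matrix.PosSemidef.zero
    · simpa [hx] using ν.psd x
  · rw [ae_iff]
    refine measure_mono_null ?_ hNnull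
    intro x hx
    simp only [mem_setOf_eq] at hx
    by_contra hxN
    exact hx (if_neg hxN)

lemma key_measure {c d : ℝ} (ν : MatMeas p c d) (D : ℝ → Mat p)
    (hDm : ∀ i j, Measurable fun x => D x i j) (hDpsd : ∀ x, (D x).PosSemidef)
    (hae : ∀ᵐ x ∂ν.base, D x = ν.dens x) (v : Fin p → ℝ) :
    ∃ κ : Measure ℝ,
      (∀ A : Set ℝ, MeasurableSet A → κ A = ENNReal.ofReal (qf (mmOf ν A) v)) ∧
      (∀ g : ℝ → ℝ, ∫ x, g x ∂κ = ∫ x, qf (ν.dens x) v * g x ∂ν.base) := by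
  have hqm : Measurable fun x => qf (D x) v := by
    simp only [qf_sum]
    exact Finset.measurable_sum _ fun k _ => Finset.measurable_sum _ fun l _ =>
      (((hDm k l).mul_const _).const_mul _)
  have hqae : (fun x => qf (D x) v) =ᵐ[ν.base] fun x => qf (ν.dens x) v := by
    filter_upwards [hae] with x hx; rw [hx]
  have hqint : Integrable (fun x => qf (D x) v) ν.base :=
    (integrable_qf ν v).congr hqae.symm
  refine ⟨ν.base.withDensity (fun x => ENNReal.ofReal (qf (D x) v)), ?_, ?_⟩
  · intro A hA
    rw [withDensity_apply _ hA]
    have h1 : ∫⁻ x in A, ENNReal.ofReal (qf (D x) v) ∂ν.base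
        = ENNReal.ofReal (∫ x in A, qf (D x) v ∂ν.base) := by
      rw [← ofReal_integral_eq_lintegral_ofReal hqint.integrableOn]
      exact Filter.Eventually.of_forall fun x => qf_nonneg (hDpsd x) v
    rw [h1]
    congr 1
    rw [integral_congr_ae (ae_restrict_of_ae hqae)]
    exact integral_qf _ (fun i j => (ν.integrable i j).integrableOn) v
  · intro g
    have hofReal : (fun x => ENNReal.ofReal (qf (D x) v))
        = fun x => (((qf (D x) v).toNNReal : ℝ≥0) : ℝ≥0∞) := rfl
    rw [hofReal, integral_withDensity_eq_integral_smul hqm.real_toNNReal g]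
    refine integral_congr_ae ?_
    filter_upwards [hae] with x hx
    rw [NNReal.smul_def, Real.coe_toNNReal _ (qf_nonneg (hDpsd x) v), hx, smul_eq_mul]

lemma mmoment_entry {c d : ℝ} (hc : -1 ≤ c) (hd : d ≤ 1) (ν : MatMeas p c d) (k : ℕ)
    (i j : Fin p) :
    mmoment ν k i j = (1/4) * ((∫ x, qf (ν.dens x) (Pi.single i 1 + Pi.single j 1) * x ^ k ∂ν.base)
      - ∫ x, qf (ν.dens x) (Pi.single i 1 - Pi.single j 1) * x ^ k ∂ν.base) := by
  have hint1 : Integrable (fun x => qf (ν.dens x) (Pi.single i 1 + Pi.single j 1) * x ^ k) ν.base := by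
    have := integrable_pow_mul hc hd ν k (integrable_qf ν (Pi.single i 1 + Pi.single j 1))
    exact this.congr (Filter.Eventually.of_forall fun x => mul_comm _ _)
  have hint2 : Integrable (fun x => qf (ν.dens x) (Pi.single i 1 - Pi.single j 1) * x ^ k) ν.base := by
    have := integrable_pow_mul hc hd ν k (integrable_qf ν (Pi.single i 1 - Pi.single j 1))
    exact this.congr (Filter.Eventually.of_forall fun x => mul_comm _ _)
  rw [← integral_sub hint1 hint2]
  have : ∀ x : ℝ, qf (ν.dens x) (Pi.single i 1 + Pi.single j 1) * x ^ k
      - qf (ν.dens x) (Pi.single i 1 - Pi.single j 1) * x ^ k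
      = 4 * (x ^ k * ν.dens x i j) := by
    intro x
    have := qf_polar (ν.symm x) i j
    linear_combination x ^ k * this
  simp only [this]
  rw [integral_const_mul]
  show mmoment ν k i j = (1/4) * (4 * ∫ x, x ^ k * ν.dens x i j ∂ν.base)
  rw [mmoment]
  simp only [Matrix.of_apply]
  ring

lemma moment_even {μ : MatMeas p 0 1} {σ : MatMeas p (-1) 1}
    (hpush : ∀ A : Set ℝ, MeasurableSet A →
      mmOf σ ((fun t : ℝ => t ^ 2) ⁻¹' A) = mmOf μ A) :
    ∀ m, mmoment σ (2 * m) = mmoment μ m := by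
  intro m
  obtain ⟨Dσ, hDσm, hDσs, hDσp, hDσae⟩ := exists_measDens σ
  obtain ⟨Dμ, hDμm, hDμs, hDμp, hDμae⟩ := exists_measDens μ
  have key : ∀ v : Fin p → ℝ, ∫ x, qf (σ.dens x) v * x ^ (2 * m) ∂σ.base
      = ∫ t, qf (μ.dens t) v * t ^ m ∂μ.base := by
    intro v
    obtain ⟨κσ, hκσA, hκσI⟩ := key_measure σ Dσ hDσm hDσp hDσae v
    obtain ⟨κμ, hκμA, hκμI⟩ := key_measure μ Dμ hDμm hDμp hDμae v
    have hsqm : Measurable fun t : ℝ => t ^ 2 := measurable_id.pow_const 2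
    have hmap : Measure.map (fun t : ℝ => t ^ 2) κσ = κμ := by
      refine Measure.ext fun A hA => ?_
      rw [Measure.map_apply hsqm hA, hκσA _ (hsqm hA), hκμA _ hA, hpush _ hA]
    have := integral_map (f := fun t : ℝ => t ^ m) hsqm.aemeasurable
      (measurable_id.pow_const m).aestronglyMeasurable (μ := κσ)
    rw [hmap] at this
    rw [← hκσI, ← hκμI, this]
    refine integral_congr_ae (Filter.Eventually.of_forall fun x => ?_)
    show x ^ (2 * m) = (x ^ 2) ^ m
    rw [pow_mul]
  ext i j
  rw [mmoment_entry (by norm_num) le_rfl σ (2 * m) i j,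
    mmoment_entry (by norm_num) le_rfl μ m i j, key, key]

lemma moment_odd {σ : MatMeas p (-1) 1}
    (hsymm : ∀ A : Set ℝ, MeasurableSet A →
      mmOf σ ((fun x : ℝ => -x) ⁻¹' A) = mmOf σ A) :
    ∀ k, Odd k → mmoment σ k = 0 := by
  intro k hk
  obtain ⟨Dσ, hDσm, hDσs, hDσp, hDσae⟩ := exists_measDens σ
  have key : ∀ v : Fin p → ℝ, ∫ x, qf (σ.dens x) v * x ^ k ∂σ.base = 0 := by
    intro v
    obtain ⟨κ, hκA, hκI⟩ := key_measure σ Dσ hDσm hDσp hDσae v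
    have hmap : Measure.map (fun x : ℝ => -x) κ = κ := by
      refine Measure.ext fun A hA => ?_
      rw [Measure.map_apply measurable_neg hA, hκA _ (measurable_neg hA), hκA _ hA,
        hsymm _ hA]
    have heq : ∫ x, x ^ k ∂κ = ∫ x, (-x) ^ k ∂κ := by
      conv_lhs => rw [← hmap]
      exact integral_map measurable_neg.aemeasurable
        (measurable_id.pow_const k).aestronglyMeasurable
    have : ∫ x, (-x) ^ k ∂κ = - ∫ x, x ^ k ∂κ := by
      simp only [hk.neg_pow]
      exact integral_neg _
    have hzero : ∫ x, x ^ k ∂κ = 0 := by linarith [heq, this]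
    rw [hκI] at hzero
    exact hzero
  ext i j
  rw [mmoment_entry (by norm_num) le_rfl σ k i j, key, key]
  simp

lemma neg_preimage_Icc : (fun x : ℝ => -x) ⁻¹' (Set.Icc (-1) 1) = Set.Icc (-1) 1 := by
  ext x
  simp only [Set.mem_preimage, Set.mem_Icc]
  constructor <;> intro h <;> constructor <;> linarith [h.1, h.2]

noncomputable def reflect (ν : MatMeas p (-1) 1) : MatMeas p (-1) 1 where
  base := Measure.map (fun x : ℝ => -x) ν.base
  dens := fun x => ν.dens (-x)
  finite := by
    haveI := ν.finite
    exact Measure.isFiniteMeasure_map ν.base _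
  supp := by
    rw [Measure.map_apply measurable_neg measurableSet_Icc.compl, Set.preimage_compl,
      neg_preimage_Icc]
    exact ν.supp
  symm := fun x => ν.symm (-x)
  psd := fun x => ν.psd (-x)
  integrable := by
    intro i j
    have hemb : MeasurableEmbedding (fun x : ℝ => -x) :=
      (Homeomorph.neg ℝ).measurableEmbedding
    rw [hemb.integrable_map_iff]
    have : ((fun x => ν.dens (-x) i j) ∘ fun x : ℝ => -x) = fun x => ν.dens x i j := by
      funext x; simp
    rw [this]
    exact ν.integrable i j
  normalized := by
    intro i j
    have := integral_map_equiv (Homeomorph.neg ℝ).toMeasurableEquiv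
      (fun x : ℝ => ν.dens (-x) i j) (μ := ν.base)
    have hco : Measure.map (⇑(Homeomorph.neg ℝ).toMeasurableEquiv) ν.base
        = Measure.map (fun x : ℝ => -x) ν.base := rfl
    rw [hco] at this
    rw [this]
    simpa using ν.normalized i j

lemma mmoment_reflect (ν : MatMeas p (-1) 1) (k : ℕ) :
    mmoment (reflect ν) k = ((-1 : ℝ)) ^ k • mmoment ν k := by
  ext i j
  show (∫ x, x ^ k * (reflect ν).dens x i j ∂(reflect ν).base)
    = ((-1:ℝ)) ^ k * mmoment ν k i j
  have : (reflect ν).base = Measure.map (fun x : ℝ => -x) ν.base := rfl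
  rw [this]
  have hmm := integral_map_equiv (Homeomorph.neg ℝ).toMeasurableEquiv
    (fun x : ℝ => x ^ k * (reflect ν).dens x i j) (μ := ν.base)
  have hco : Measure.map (⇑(Homeomorph.neg ℝ).toMeasurableEquiv) ν.base
      = Measure.map (fun x : ℝ => -x) ν.base := rfl
  rw [hco] at hmm
  rw [hmm]
  have : ∀ x : ℝ, (-x) ^ k * (reflect ν).dens (-x) i j
      = ((-1:ℝ)) ^ k * (x ^ k * ν.dens x i j) := by
    intro x
    show (-x) ^ k * ν.dens (- - x) i j = _
    rw [neg_neg, neg_pow]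
    ring
  calc ∫ x, (fun y : ℝ => y ^ k * (reflect ν).dens y i j) (-x) ∂ν.base
      = ∫ x, ((-1:ℝ)) ^ k * (x ^ k * ν.dens x i j) ∂ν.base := by
        refine integral_congr_ae (Filter.Eventually.of_forall fun x => ?_)
        exact this x
    _ = ((-1:ℝ)) ^ k * mmoment ν k i j := by
        rw [integral_const_mul]; rfl

lemma psd_smul {A : Mat p} (hA : A.PosSemidef) {c : ℝ} (hc : 0 ≤ c) :
    (c • A).PosSemidef := by
  constructor
  · have : (c • A)ᴴ = star c • Aᴴ := Matrix.conjTranspose_smul c A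
    rw [Matrix.IsHermitian, this, hA.1, star_trivial]
  · exact (hA.smul hc).2

lemma symm_smul {A : Mat p} (hA : A.IsSymm) (c : ℝ) : (c • A).IsSymm := by
  unfold Matrix.IsSymm
  rw [Matrix.transpose_smul, hA]

lemma integrable_bdd_mul {b : Measure ℝ} {f g : ℝ → ℝ} (hf : Integrable f b)
    (hgm : AEStronglyMeasurable g b) (hbd : ∀ᵐ x ∂b, |g x| ≤ 1) :
    Integrable (fun x => g x * f x) b := by
  refine Integrable.mono' hf.abs (hgm.mul hf.1) ?_
  filter_upwards [hbd] with x hx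
  calc |g x * f x| = |g x| * |f x| := abs_mul _ _
  _ ≤ 1 * |f x| := mul_le_mul_of_nonneg_right hx (abs_nonneg _)
  _ = |f x| := one_mul _

lemma toSigma (ρ : MatMeas p 0 1) :
    ∃ ν : MatMeas p (-1) 1,
      (∀ m, mmoment ν (2 * m) = mmoment ρ m) ∧ (∀ k, Odd k → mmoment ν k = 0) := by
  obtain ⟨E, hEm, hEs, hEp, hEae⟩ := exists_measDens ρ
  haveI := ρ.finite
  have hsq : Measurable fun t : ℝ => Real.sqrt t := Real.continuous_sqrt.measurable
  have hnsq : Measurable fun t : ℝ => -Real.sqrt t := hsq.neg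
  set b1 : Measure ℝ := Measure.map Real.sqrt ρ.base with hb1
  set b2 : Measure ℝ := Measure.map (fun t => -Real.sqrt t) ρ.base with hb2
  -- the density of the symmetrized measure
  set F : ℝ → Mat p := fun x => (1/2 : ℝ) • E (x ^ 2) with hF
  have hFm : ∀ i j, Measurable fun x => F x i j := by
    intro i j
    have : (fun x => F x i j) = fun x => (1/2 : ℝ) * E (x ^ 2) i j := by
      funext x; simp [hF, Matrix.smul_apply, smul_eq_mul]
    rw [this]
    exact (((hEm i j).comp (measurable_id.pow_const 2)).const_mul _)
  have haeIcc := ae_mem_Icc ρ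
  -- integrability of x^k * F entries with respect to b1, b2
  have hcomp1 : ∀ (k : ℕ) i j, ((fun x => x ^ k * F x i j) ∘ Real.sqrt)
      =ᵐ[ρ.base] fun t => (Real.sqrt t) ^ k * ((1/2 : ℝ) * ρ.dens t i j) := by
    intro k i j
    filter_upwards [haeIcc, hEae] with t ht hE
    show (Real.sqrt t) ^ k * F (Real.sqrt t) i j = _
    have h2 : Real.sqrt t ^ 2 = t := Real.sq_sqrt ht.1
    simp [hF, Matrix.smul_apply, smul_eq_mul, h2, hE]
  have hcomp2 : ∀ (k : ℕ) i j, ((fun x => x ^ k * F x i j) ∘ fun t => -Real.sqrt t)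
      =ᵐ[ρ.base] fun t => (-Real.sqrt t) ^ k * ((1/2 : ℝ) * ρ.dens t i j) := by
    intro k i j
    filter_upwards [haeIcc, hEae] with t ht hE
    show (-Real.sqrt t) ^ k * F (-Real.sqrt t) i j = _
    have h2 : (-Real.sqrt t) ^ 2 = t := by rw [neg_pow]; simp [Real.sq_sqrt ht.1]
    simp [hF, Matrix.smul_apply, smul_eq_mul, h2, hE]
  have hbdd : ∀ k : ℕ, ∀ᵐ t ∂ρ.base, |(Real.sqrt t) ^ k| ≤ 1 := by
    intro k
    filter_upwards [haeIcc] with t ht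
    rw [abs_pow]
    refine pow_le_one₀ (abs_nonneg _) ?_
    rw [abs_of_nonneg (Real.sqrt_nonneg t)]
    exact Real.sqrt_le_one.2 ht.2
  have hint1' : ∀ (k : ℕ) i j,
      Integrable (fun t => (Real.sqrt t) ^ k * ((1/2 : ℝ) * ρ.dens t i j)) ρ.base := by
    intro k i j
    exact integrable_bdd_mul ((ρ.integrable i j).const_mul _)
      ((hsq.pow_const k).aestronglyMeasurable) (hbdd k)
  have hint2' : ∀ (k : ℕ) i j,
      Integrable (fun t => (-Real.sqrt t) ^ k * ((1/2 : ℝ) * ρ.dens t i j)) ρ.base := by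
    intro k i j
    refine integrable_bdd_mul ((ρ.integrable i j).const_mul _)
      ((hnsq.pow_const k).aestronglyMeasurable) ?_
    filter_upwards [hbdd k] with t ht
    rwa [abs_pow, abs_neg, ← abs_pow]
  have hmeas : ∀ (k : ℕ) i j, Measurable fun x : ℝ => x ^ k * F x i j := fun k i j =>
    (measurable_id.pow_const k).mul (hFm i j)
  have hint1 : ∀ (k : ℕ) i j, Integrable (fun x => x ^ k * F x i j) b1 := by
    intro k i j
    rw [hb1, integrable_map_measure ((hmeas k i j).aestronglyMeasurable) hsq.aemeasurable]
    exact (hint1' k i j).congr (hcomp1 k i j).symm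
  have hint2 : ∀ (k : ℕ) i j, Integrable (fun x => x ^ k * F x i j) b2 := by
    intro k i j
    rw [hb2, integrable_map_measure ((hmeas k i j).aestronglyMeasurable) hnsq.aemeasurable]
    exact (hint2' k i j).congr (hcomp2 k i j).symm
  have hintegral : ∀ (k : ℕ) i j, ∫ x, x ^ k * F x i j ∂(b1 + b2)
      = (∫ t, (Real.sqrt t) ^ k * ((1/2 : ℝ) * ρ.dens t i j) ∂ρ.base)
        + ∫ t, (-Real.sqrt t) ^ k * ((1/2 : ℝ) * ρ.dens t i j) ∂ρ.base := by
    intro k i j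
    rw [integral_add_measure (hint1 k i j) (hint2 k i j)]
    congr 1
    · rw [hb1, integral_map hsq.aemeasurable ((hmeas k i j).aestronglyMeasurable)]
      exact integral_congr_ae (hcomp1 k i j)
    · rw [hb2, integral_map hnsq.aemeasurable ((hmeas k i j).aestronglyMeasurable)]
      exact integral_congr_ae (hcomp2 k i j)
  refine ⟨⟨b1 + b2, F, ?_, ?_, ?_, ?_, ?_, ?_⟩, ?_, ?_⟩
  · haveI h1 : IsFiniteMeasure b1 := Measure.isFiniteMeasure_map _ _
    haveI h2 : IsFiniteMeasure b2 := Measure.isFiniteMeasure_map _ _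
    infer_instance
  · show (b1 + b2) (Set.Icc (-1) 1)ᶜ = 0
    rw [Measure.add_apply]
    have h1 : b1 (Set.Icc (-1) 1)ᶜ = 0 := by
      rw [hb1, Measure.map_apply hsq measurableSet_Icc.compl]
      refine measure_mono_null ?_ ρ.supp
      intro t ht
      simp only [Set.mem_preimage, Set.mem_compl_iff, Set.mem_Icc] at ht ⊢
      intro hmem
      exact ht ⟨le_trans (by norm_num) (Real.sqrt_nonneg t), Real.sqrt_le_one.2 hmem.2⟩
    have h2 : b2 (Set.Icc (-1) 1)ᶜ = 0 := by
      rw [hb2, Measure.map_apply hnsq measurableSet_Icc.compl]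
      refine measure_mono_null ?_ ρ.supp
      intro t ht
      simp only [Set.mem_preimage, Set.mem_compl_iff, Set.mem_Icc] at ht ⊢
      intro hmem
      refine ht ⟨?_, le_trans (neg_nonpos.2 (Real.sqrt_nonneg t)) (by norm_num)⟩
      rw [neg_le_neg_iff]
      exact Real.sqrt_le_one.2 hmem.2
    rw [h1, h2, add_zero]
  · intro x
    exact symm_smul (hEs _) _
  · intro x
    exact psd_smul (hEp _) (by norm_num)
  · intro i j
    have := hintegral 0 i j
    simp only [pow_zero, one_mul] at this
    exact (hint1 0 i j).congr (by simp) |>.add_measure ((hint2 0 i j).congr (by simp))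
  · intro i j
    have h := hintegral 0 i j
    simp only [pow_zero, one_mul] at h
    rw [h]
    have : (∫ t, (1/2 : ℝ) * ρ.dens t i j ∂ρ.base) + ∫ t, (1/2 : ℝ) * ρ.dens t i j ∂ρ.base
        = (1 : Mat p) i j := by
      rw [integral_const_mul, ← ρ.normalized i j]
      ring
    rw [← this]
  · intro m
    ext i j
    show (∫ x, x ^ (2*m) * F x i j ∂(b1 + b2)) = mmoment ρ m i j
    rw [hintegral (2*m) i j]
    have heq : ∀ᵐ t ∂ρ.base, (Real.sqrt t) ^ (2*m) * ((1/2 : ℝ) * ρ.dens t i j)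
        = (1/2 : ℝ) * (t ^ m * ρ.dens t i j) := by
      filter_upwards [haeIcc] with t ht
      rw [pow_mul, Real.sq_sqrt ht.1]
      ring
    have heq2 : ∀ᵐ t ∂ρ.base, (-Real.sqrt t) ^ (2*m) * ((1/2 : ℝ) * ρ.dens t i j)
        = (1/2 : ℝ) * (t ^ m * ρ.dens t i j) := by
      filter_upwards [haeIcc] with t ht
      rw [pow_mul, neg_pow, even_two.neg_one_pow, one_mul, Real.sq_sqrt ht.1]
      ring
    rw [integral_congr_ae heq, integral_congr_ae heq2, integral_const_mul]
    show (1/2 : ℝ) * mmoment ρ m i j + (1/2 : ℝ) * mmoment ρ m i j = mmoment ρ m i j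
    ring
  · intro k hk
    ext i j
    show (∫ x, x ^ k * F x i j ∂(b1 + b2)) = 0
    rw [hintegral k i j]
    have heq2 : ∀ᵐ t ∂ρ.base, (-Real.sqrt t) ^ k * ((1/2 : ℝ) * ρ.dens t i j)
        = - ((Real.sqrt t) ^ k * ((1/2 : ℝ) * ρ.dens t i j)) := by
      refine Filter.Eventually.of_forall fun t => ?_
      rw [hk.neg_pow]
      ring
    rw [integral_congr_ae heq2, integral_neg]
    simp

lemma toMu (ν : MatMeas p (-1) 1) :
    ∃ κ : MatMeas p 0 1, ∀ m, mmoment κ m = mmoment ν (2 * m) := by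
  obtain ⟨D, hDm, hDs, hDp, hDae⟩ := exists_measDens ν
  haveI := ν.finite
  set b : Measure ℝ := ν.base with hb
  set m2 : Measure ℝ := Measure.map (fun x : ℝ => -x) b with hm2
  haveI : IsFiniteMeasure m2 := Measure.isFiniteMeasure_map _ _
  set s : Measure ℝ := b + m2 with hs
  haveI : IsFiniteMeasure s := by infer_instance
  have habs : b ≪ s := Measure.absolutelyContinuous_of_le (Measure.le_add_right le_rfl)
  set fn : ℝ → ℝ≥0 := fun x => (b.rnDeriv s x).toNNReal with hfn
  have hfnm : Measurable fn := (Measure.measurable_rnDeriv b s).ennreal_toNNReal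
  have hwd : s.withDensity (fun x => (fn x : ℝ≥0∞)) = b := by
    have h1 : s.withDensity (b.rnDeriv s) = b := Measure.withDensity_rnDeriv_eq b s habs
    rw [← h1]
    refine withDensity_congr_ae ?_
    filter_upwards [Measure.rnDeriv_lt_top b s] with x hx
    exact ENNReal.coe_toNNReal hx.ne
  have hmapneg : Measure.map (fun x : ℝ => -x) s = s := by
    rw [hs, Measure.map_add _ _ measurable_neg, ← hm2]
    have : Measure.map (fun x : ℝ => -x) m2 = b := by
      rw [hm2, Measure.map_map measurable_neg measurable_neg]
      have : ((fun x : ℝ => -x) ∘ fun x : ℝ => -x) = id := by funext x; simp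
      rw [this, Measure.map_id]
    rw [this, add_comm]
  set G : ℝ → Mat p := fun x =>
    ((fn x : ℝ) * (1/2)) • D x + ((fn (-x) : ℝ) * (1/2)) • D (-x) with hG
  have hGeven : ∀ x, G (-x) = G x := by
    intro x; simp only [hG, neg_neg]; exact add_comm _ _
  have hGentry : ∀ x i j, G x i j
      = ((fn x : ℝ) * (1/2)) * D x i j + ((fn (-x) : ℝ) * (1/2)) * D (-x) i j := by
    intro x i j
    simp [hG, Matrix.add_apply, Matrix.smul_apply, smul_eq_mul]
  have hGm : ∀ i j, Measurable fun x => G x i j := by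
    intro i j
    simp only [hGentry]
    exact ((hfnm.coe_nnreal_real.mul measurable_const).mul (hDm i j)).add
      (((hfnm.comp measurable_neg).coe_nnreal_real.mul measurable_const).mul
        ((hDm i j).comp measurable_neg))
  have hGsymm : ∀ x, (G x).IsSymm :=
    fun x => (symm_smul (hDs x) _).add (symm_smul (hDs (-x)) _)
  have hGpsd : ∀ x, (G x).PosSemidef := by
    intro x
    refine (psd_smul (hDp x) ?_).add (psd_smul (hDp (-x)) ?_) <;> positivity
  have hsqx : ∀ x : ℝ, G (Real.sqrt (x ^ 2)) = G x := by
    intro x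
    rw [Real.sqrt_sq_eq_abs]
    rcases abs_choice x with h | h
    · rw [h]
    · rw [h, hGeven]
  -- the key integral identity
  have key : ∀ g : ℝ → ℝ, Measurable g →
      (∀ i j, Integrable (fun x => g (x ^ 2) * ν.dens x i j) b) →
      ∀ i j, Integrable (fun x => g (x ^ 2) * G x i j) s ∧
        ∫ x, g (x ^ 2) * G x i j ∂s = ∫ x, g (x ^ 2) * ν.dens x i j ∂b := by
    intro g hgm hgb i j
    set G0 : ℝ → ℝ := fun x => g (x ^ 2) * D x i j with hG0
    have hG0m : Measurable G0 := (hgm.comp (measurable_id.pow_const 2)).mul (hDm i j)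
    have hG0b : Integrable G0 b := by
      refine (hgb i j).congr ?_
      filter_upwards [hDae] with x hx
      show g (x ^ 2) * ν.dens x i j = g (x ^ 2) * D x i j
      rw [hx]
    set h1 : ℝ → ℝ := fun x => (fn x : ℝ) * G0 x with hh1
    have hh1m : Measurable h1 := hfnm.coe_nnreal_real.mul hG0m
    have hh1int : Integrable h1 s := by
      have := (integrable_withDensity_iff_integrable_smul hfnm (g := G0)).1 (by rwa [hwd])
      refine this.congr (Filter.Eventually.of_forall fun x => ?_)
      show fn x • G0 x = (fn x : ℝ) * G0 x
      rw [NNReal.smul_def, smul_eq_mul]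
    have hh1eq : ∫ x, h1 x ∂s = ∫ x, G0 x ∂b := by
      rw [← hwd, integral_withDensity_eq_integral_smul hfnm]
      refine integral_congr_ae (Filter.Eventually.of_forall fun x => ?_)
      show (fn x : ℝ) * G0 x = fn x • G0 x
      rw [NNReal.smul_def, smul_eq_mul]
    have hnegint : Integrable (fun x => h1 (-x)) s := by
      have h2 : Integrable h1 (Measure.map (fun x : ℝ => -x) s) := by rwa [hmapneg]
      exact ((Homeomorph.neg ℝ).measurableEmbedding.integrable_map_iff).1 h2
    have hnegeq : ∫ x, h1 (-x) ∂s = ∫ x, h1 x ∂s := by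
      have h3 := integral_map_equiv (Homeomorph.neg ℝ).toMeasurableEquiv h1 (μ := s)
      have hco : Measure.map (⇑(Homeomorph.neg ℝ).toMeasurableEquiv) s
          = Measure.map (fun x : ℝ => -x) s := rfl
      rw [hco, hmapneg] at h3
      calc ∫ x, h1 (-x) ∂s = ∫ x, h1 ((Homeomorph.neg ℝ).toMeasurableEquiv x) ∂s :=
            integral_congr_ae (Filter.Eventually.of_forall fun x => rfl)
        _ = ∫ x, h1 x ∂s := h3.symm
    have hsplit : ∀ x, g (x ^ 2) * G x i j = (1/2 : ℝ) * h1 x + (1/2 : ℝ) * h1 (-x) := by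
      intro x
      rw [hGentry, hh1]
      show g (x ^ 2) * (((fn x : ℝ) * (1/2)) * D x i j + ((fn (-x) : ℝ) * (1/2)) * D (-x) i j) = _
      have : ((-x) ^ 2 : ℝ) = x ^ 2 := by ring
      rw [hG0]
      simp only [this]
      ring
    constructor
    · have : Integrable (fun x => (1/2 : ℝ) * h1 x + (1/2 : ℝ) * h1 (-x)) s :=
        (hh1int.const_mul _).add (hnegint.const_mul _)
      exact this.congr (Filter.Eventually.of_forall fun x => (hsplit x).symm)
    · calc ∫ x, g (x ^ 2) * G x i j ∂s
          = ∫ x, (1/2 : ℝ) * h1 x + (1/2 : ℝ) * h1 (-x) ∂s :=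
            integral_congr_ae (Filter.Eventually.of_forall hsplit)
        _ = (1/2 : ℝ) * (∫ x, h1 x ∂s) + (1/2 : ℝ) * ∫ x, h1 (-x) ∂s := by
            rw [integral_add (hh1int.const_mul _) (hnegint.const_mul _),
              integral_const_mul, integral_const_mul]
        _ = ∫ x, G0 x ∂b := by rw [hnegeq, hh1eq]; ring
        _ = ∫ x, g (x ^ 2) * ν.dens x i j ∂b := by
            refine integral_congr_ae ?_
            filter_upwards [hDae] with x hx
            show g (x ^ 2) * D x i j = g (x ^ 2) * ν.dens x i j
            rw [hx]
  have hsqm : Measurable fun x : ℝ => x ^ 2 := measurable_id.pow_const 2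
  have hsqrtm : Measurable fun y : ℝ => Real.sqrt y := Real.continuous_sqrt.measurable
  have hKm : ∀ i j, Measurable fun y : ℝ => G (Real.sqrt y) i j :=
    fun i j => (hGm i j).comp hsqrtm
  -- integrability over the pushforward
  have hmapint : ∀ g : ℝ → ℝ, Measurable g →
      (∀ i j, Integrable (fun x => g (x ^ 2) * ν.dens x i j) b) →
      ∀ i j, Integrable (fun y => g y * G (Real.sqrt y) i j) (Measure.map (fun x : ℝ => x ^ 2) s)
        ∧ ∫ y, g y * G (Real.sqrt y) i j ∂(Measure.map (fun x : ℝ => x ^ 2) s)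
          = ∫ x, g (x ^ 2) * ν.dens x i j ∂b := by
    intro g hgm hgb i j
    obtain ⟨hint, heq⟩ := key g hgm hgb i j
    have hmeas : Measurable fun y : ℝ => g y * G (Real.sqrt y) i j := hgm.mul (hKm i j)
    have hcompeq : ∀ x : ℝ, g (x ^ 2) * G (Real.sqrt (x ^ 2)) i j = g (x ^ 2) * G x i j := by
      intro x; rw [hsqx]
    constructor
    · rw [integrable_map_measure hmeas.aestronglyMeasurable hsqm.aemeasurable]
      exact hint.congr (Filter.Eventually.of_forall fun x => (hcompeq x).symm)
    · rw [integral_map hsqm.aemeasurable hmeas.aestronglyMeasurable]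
      rw [← heq]
      exact integral_congr_ae (Filter.Eventually.of_forall hcompeq)
  have hone : ∀ i j, Integrable (fun x => (fun _ : ℝ => (1:ℝ)) (x ^ 2) * ν.dens x i j) b := by
    intro i j
    exact (ν.integrable i j).congr (Filter.Eventually.of_forall fun x => by simp)
  have hpow : ∀ m : ℕ, ∀ i j,
      Integrable (fun x => (fun y : ℝ => y ^ m) (x ^ 2) * ν.dens x i j) b := by
    intro m i j
    have := integrable_pow_mul (by norm_num) le_rfl ν (2 * m) (ν.integrable i j)
    refine this.congr (Filter.Eventually.of_forall fun x => ?_)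
    show x ^ (2 * m) * ν.dens x i j = (x ^ 2) ^ m * ν.dens x i j
    rw [pow_mul]
  refine ⟨⟨Measure.map (fun x : ℝ => x ^ 2) s, fun y => G (Real.sqrt y),
    Measure.isFiniteMeasure_map _ _, ?_, fun y => hGsymm _, fun y => hGpsd _, ?_, ?_⟩, ?_⟩
  · rw [Measure.map_apply hsqm measurableSet_Icc.compl]
    have hsub : (fun x : ℝ => x ^ 2) ⁻¹' (Set.Icc 0 1)ᶜ ⊆ (Set.Icc (-1) 1)ᶜ := by
      intro x hx
      simp only [Set.mem_preimage, Set.mem_compl_iff, Set.mem_Icc] at hx ⊢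
      intro hmem
      refine hx ⟨by positivity, ?_⟩
      have h1 : |x| ≤ 1 := abs_le.2 hmem
      calc x ^ 2 = |x| ^ 2 := (sq_abs x).symm
      _ ≤ 1 := pow_le_one₀ (abs_nonneg x) h1
    have hs0 : s (Set.Icc (-1) 1)ᶜ = 0 := by
      rw [hs, Measure.add_apply]
      have hb0 : b (Set.Icc (-1) 1)ᶜ = 0 := ν.supp
      have hm20 : m2 (Set.Icc (-1) 1)ᶜ = 0 := by
        rw [hm2, Measure.map_apply measurable_neg measurableSet_Icc.compl,
          Set.preimage_compl, neg_preimage_Icc]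
        exact ν.supp
      rw [hb0, hm20, add_zero]
    exact measure_mono_null hsub hs0
  · intro i j
    have := (hmapint (fun _ => (1:ℝ)) measurable_const hone i j).1
    exact this.congr (Filter.Eventually.of_forall fun y => by simp)
  · intro i j
    have := (hmapint (fun _ => (1:ℝ)) measurable_const hone i j).2
    simp only [one_mul] at this
    rw [this]
    exact ν.normalized i j
  · intro m
    ext i j
    show (∫ y, y ^ m * G (Real.sqrt y) i j ∂(Measure.map (fun x : ℝ => x ^ 2) s))
      = mmoment ν (2 * m) i j
    rw [(hmapint (fun y : ℝ => y ^ m) (measurable_id.pow_const m) (hpow m) i j).2]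
    show (∫ x, (x ^ 2) ^ m * ν.dens x i j ∂b) = ∫ x, x ^ (2 * m) * ν.dens x i j ∂ν.base
    refine integral_congr_ae (Filter.Eventually.of_forall fun x => ?_)
    show (x ^ 2) ^ m * ν.dens x i j = x ^ (2 * m) * ν.dens x i j
    rw [pow_mul]

end CMHelp

open CMHelp

/-- If `σ` is the symmetric matrix measure on `[-1,1]` induced from a matrix
measure `μ` on `[0,1]` via `σ([-x,x]) = μ([0,x²])` (i.e. `σ` is invariant under
`x ↦ -x` and its pushforward under `t ↦ t²` is `μ`), then the moments satisfy
`S^σ_{2n} = S^μ_n` and `S^σ_{2n-1} = 0`, and the canonical moments satisfy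
`U^σ_{2n-1} = (1/2) I_p` and `U^σ_{2n} = U^μ_n`, whenever defined.  The
matrices `Omin, Omax` are the extremal `(2n-1)`-st moments of `σ`,
`Emin, Emax` the extremal `2n`-th moments of `σ`, and `Smin, Smax` the extremal
`n`-th moments of `μ`, all given the respective previous moments; `R`, `R'`
are the symmetric positive definite square roots of `Omax - Omin` and
`Emax - Emin`, and `Q` that of `Smax - Smin`. -/
theorem canonical_moments_of_symmetrized (p n : ℕ) (hp : 0 < p) (hn : 1 ≤ n)
    (μ : MatMeas p 0 1) (σ : MatMeas p (-1) 1)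
    (hsymm : ∀ A : Set ℝ, MeasurableSet A →
      mmOf σ ((fun x : ℝ => -x) ⁻¹' A) = mmOf σ A)
    (hpush : ∀ A : Set ℝ, MeasurableSet A →
      mmOf σ ((fun t : ℝ => t ^ 2) ⁻¹' A) = mmOf μ A)
    (Omin Omax : Matrix (Fin p) (Fin p) ℝ)
    (hOminMem : Omin ∈ kthMomentSet p (-1) 1 (2 * n - 1) (fun j => mmoment σ j))
    (hOminLe : ∀ T ∈ kthMomentSet p (-1) 1 (2 * n - 1) (fun j => mmoment σ j),
      (T - Omin).PosSemidef)
    (hOmaxMem : Omax ∈ kthMomentSet p (-1) 1 (2 * n - 1) (fun j => mmoment σ j))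
    (hOmaxGe : ∀ T ∈ kthMomentSet p (-1) 1 (2 * n - 1) (fun j => mmoment σ j),
      (Omax - T).PosSemidef)
    (Emin Emax : Matrix (Fin p) (Fin p) ℝ)
    (hEminMem : Emin ∈ kthMomentSet p (-1) 1 (2 * n) (fun j => mmoment σ j))
    (hEminLe : ∀ T ∈ kthMomentSet p (-1) 1 (2 * n) (fun j => mmoment σ j),
      (T - Emin).PosSemidef)
    (hEmaxMem : Emax ∈ kthMomentSet p (-1) 1 (2 * n) (fun j => mmoment σ j))
    (hEmaxGe : ∀ T ∈ kthMomentSet p (-1) 1 (2 * n) (fun j => mmoment σ j),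
      (Emax - T).PosSemidef)
    (Smin Smax : Matrix (Fin p) (Fin p) ℝ)
    (hSminMem : Smin ∈ kthMomentSet p 0 1 n (fun j => mmoment μ j))
    (hSminLe : ∀ T ∈ kthMomentSet p 0 1 n (fun j => mmoment μ j), (T - Smin).PosSemidef)
    (hSmaxMem : Smax ∈ kthMomentSet p 0 1 n (fun j => mmoment μ j))
    (hSmaxGe : ∀ T ∈ kthMomentSet p 0 1 n (fun j => mmoment μ j), (Smax - T).PosSemidef)
    (hDO : (Omax - Omin).PosDef) (hDE : (Emax - Emin).PosDef) (hDS : (Smax - Smin).PosDef)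
    (R : Matrix (Fin p) (Fin p) ℝ) (hRsymm : R.IsSymm) (hRpd : R.PosDef)
    (hRR : R * R = Omax - Omin)
    (R' : Matrix (Fin p) (Fin p) ℝ) (hR'symm : R'.IsSymm) (hR'pd : R'.PosDef)
    (hR'R' : R' * R' = Emax - Emin)
    (Q : Matrix (Fin p) (Fin p) ℝ) (hQsymm : Q.IsSymm) (hQpd : Q.PosDef)
    (hQQ : Q * Q = Smax - Smin) :
    (mmoment σ (2 * n) = mmoment μ n) ∧
    (mmoment σ (2 * n - 1) = 0) ∧
    (R⁻¹ * (mmoment σ (2 * n - 1) - Omin) * R⁻¹ =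
      (1 / 2 : ℝ) • (1 : Matrix (Fin p) (Fin p) ℝ)) ∧
    (R'⁻¹ * (mmoment σ (2 * n) - Emin) * R'⁻¹ =
      Q⁻¹ * (mmoment μ n - Smin) * Q⁻¹) := by
  have hA := moment_even hpush
  have hB := moment_odd hsymm
  have hodd : Odd (2 * n - 1) := ⟨n - 1, by omega⟩
  have h1 : mmoment σ (2 * n) = mmoment μ n := hA n
  have h2 : mmoment σ (2 * n - 1) = 0 := hB _ hodd
  -- Part 3 : negation invariance of the (2n-1)-st moment set
  have neg_mem : ∀ T ∈ kthMomentSet p (-1) 1 (2 * n - 1) (fun j => mmoment σ j),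
      -T ∈ kthMomentSet p (-1) 1 (2 * n - 1) (fun j => mmoment σ j) := by
    rintro T ⟨ν, hmom, hT⟩
    refine ⟨reflect ν, ?_, ?_⟩
    · intro j h1j hj
      have hx : mmoment ν j = mmoment σ j := hmom j h1j hj
      show mmoment (reflect ν) j = mmoment σ j
      rw [mmoment_reflect, hx]
      rcases Nat.even_or_odd j with he | ho
      · rw [he.neg_one_pow, one_smul]
      · rw [hB j ho, smul_zero]
    · rw [mmoment_reflect, hT, hodd.neg_one_pow, neg_one_smul]
  have hsum : Omax + Omin = 0 := by
    have hpsd1 : (Omax + Omin).PosSemidef := by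
      have := hOmaxGe (-Omin) (neg_mem Omin hOminMem)
      rwa [sub_neg_eq_add] at this
    have hpsd2 : (-(Omax + Omin)).PosSemidef := by
      have := hOminLe (-Omax) (neg_mem Omax hOmaxMem)
      rwa [show -Omax - Omin = -(Omax + Omin) by abel] at this
    exact psd_eq_zero hpsd1 hpsd2
  have hOminneg : Omin = -Omax := by
    have := hsum
    rw [add_comm] at this
    exact eq_neg_of_add_eq_zero_left this
  have hRdet : IsUnit R.det := hRpd.det_pos.ne'.isUnit
  have part3 : R⁻¹ * (mmoment σ (2 * n - 1) - Omin) * R⁻¹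
      = (1 / 2 : ℝ) • (1 : Matrix (Fin p) (Fin p) ℝ) := by
    rw [h2, zero_sub, hOminneg, neg_neg]
    have hOmax : Omax = (1 / 2 : ℝ) • (R * R) := by
      rw [hRR, hOminneg, sub_neg_eq_add, smul_add]
      rw [← add_smul]
      norm_num
    rw [hOmax, Matrix.mul_smul, Matrix.smul_mul]
    congr 1
    calc R⁻¹ * (R * R) * R⁻¹ = (R⁻¹ * R) * (R * R⁻¹) := by
          rw [← Matrix.mul_assoc, ← Matrix.mul_assoc]
      _ = 1 := by rw [Matrix.nonsing_inv_mul R hRdet, Matrix.mul_nonsing_inv R hRdet, one_mul]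
  -- Part 4 : the two 2n-th/n-th moment sets coincide
  have hset : kthMomentSet p (-1) 1 (2 * n) (fun j => mmoment σ j)
      = kthMomentSet p 0 1 n (fun j => mmoment μ j) := by
    ext T
    constructor
    · rintro ⟨ν, hmom, hT⟩
      obtain ⟨κ, hκ⟩ := toMu ν
      refine ⟨κ, ?_, ?_⟩
      · intro j h1j hjn
        have hx : mmoment ν (2 * j) = mmoment σ (2 * j) := hmom (2 * j) (by omega) (by omega)
        show mmoment κ j = mmoment μ j
        rw [hκ j, hx, hA j]
      · show mmoment κ n = T
        rw [hκ n, hT]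
    · rintro ⟨ρ, hmom, hT⟩
      obtain ⟨ν, hν1, hν2⟩ := toSigma ρ
      refine ⟨ν, ?_, ?_⟩
      · intro j h1j hj2n
        show mmoment ν j = mmoment σ j
        rcases Nat.even_or_odd j with he | ho
        · obtain ⟨m, hm⟩ := he
          have hj : j = 2 * m := by omega
          have hx : mmoment ρ m = mmoment μ m := hmom m (by omega) (by omega)
          rw [hj, hν1 m, hx, ← hA m]
        · rw [hν2 j ho, hB j ho]
      · show mmoment ν (2 * n) = T
        rw [hν1 n, hT]
  have hEminS : Emin = Smin := by
    have hSmem : Smin ∈ kthMomentSet p (-1) 1 (2 * n) (fun j => mmoment σ j) := by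
      rw [hset]; exact hSminMem
    have hEmem : Emin ∈ kthMomentSet p 0 1 n (fun j => mmoment μ j) := by
      rw [← hset]; exact hEminMem
    have h5 : (Smin - Emin).PosSemidef := hEminLe Smin hSmem
    have h6 : (Emin - Smin).PosSemidef := hSminLe Emin hEmem
    have h7 : (-(Smin - Emin)).PosSemidef := by rwa [neg_sub]
    have := psd_eq_zero h5 h7
    rw [sub_eq_zero] at this
    exact this.symm
  have hEmaxS : Emax = Smax := by
    have hSmem : Smax ∈ kthMomentSet p (-1) 1 (2 * n) (fun j => mmoment σ j) := by
      rw [hset]; exact hSmaxMem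
    have hEmem : Emax ∈ kthMomentSet p 0 1 n (fun j => mmoment μ j) := by
      rw [← hset]; exact hEmaxMem
    have h5 : (Emax - Smax).PosSemidef := hEmaxGe Smax hSmem
    have h6 : (Smax - Emax).PosSemidef := hSmaxGe Emax hEmem
    have h7 : (-(Emax - Smax)).PosSemidef := by rwa [neg_sub]
    exact sub_eq_zero.1 (psd_eq_zero h5 h7)
  have hR'Q : R' = Q := by
    refine (open scoped MatrixOrder in
      (CFC.sq_eq_sq_iff R' Q hR'pd.posSemidef.nonneg hQpd.posSemidef.nonneg).1) ?_
    rw [pow_two, pow_two, hR'R', hQQ, hEmaxS, hEminS]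
  refine ⟨h1, h2, part3, ?_⟩
  rw [h1, hEminS, hR'Q]
end

section
/- Define ζ₀ = 0, ζ₁ = u₁, and ζ_j = (1-u_{j-1}) u_j for scalars u_j ∈ (0,1). Define the array G_{i,j} by G_{i,j} = 0 for i > j, G_{0,j} = 1, and G_{i,j} = G_{i,j-1} + ζ_{j-i+1} G_{i-1,j} for 1 ≤ i ≤ j. Then G_{n,n} = Σ over all tuples (i₁,…,i_n) with i₁ = 1, i_k ∈ {1,…,n}, and i_k ≤ i_{k-1}+1, of the product ζ_{i_n} ⋯ ζ_{i_1}. -/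
open scoped Classical

namespace GDiagAux

/-- The chain condition `i_{k+1} ≤ i_k + 1`. -/
def Chain {n M : ℕ} (i : Fin M → Fin (n+1)) : Prop :=
  ∀ k : ℕ, ∀ h : k + 1 < M, (i ⟨k+1, h⟩ : ℕ) ≤ (i ⟨k, Nat.lt_of_succ_lt h⟩ : ℕ) + 1

/-- Full path condition with offset `d`. -/
def Cond {n : ℕ} (d : ℕ) {M : ℕ} (i : Fin M → Fin (n+1)) : Prop :=
  (∀ k, 1 ≤ (i k : ℕ) ∧ (i k : ℕ) ≤ d + (k : ℕ) + 1) ∧ Chain i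

noncomputable def S (n : ℕ) (ζ : ℕ → ℝ) (M d : ℕ) : ℝ :=
  ∑ i : Fin M → Fin (n+1), if Cond d i then ∏ k, ζ (i k) else 0

lemma cons_mk_succ {α : Type*} {M : ℕ} (x : α) (p : Fin M → α) (k : ℕ) (h : k+1 < M+1) :
    (Fin.cons x p : Fin (M+1) → α) ⟨k+1, h⟩ = p ⟨k, Nat.lt_of_succ_lt_succ h⟩ := rfl

lemma cons_mk_zero {α : Type*} {M : ℕ} (x : α) (p : Fin M → α) (h : 0 < M+1) :
    (Fin.cons x p : Fin (M+1) → α) ⟨0, h⟩ = x := rfl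

lemma chain_le {n M : ℕ} {i : Fin M → Fin (n+1)} (hc : Chain i) (hM : 0 < M) :
    ∀ k (h : k < M),
      (i ⟨k, h⟩ : ℕ) ≤ (i ⟨0, hM⟩ : ℕ) + k := by
  intro k
  induction k with
  | zero => intro h; simp
  | succ k ih =>
    intro h
    have h1 := hc k h
    have h2 := ih (Nat.lt_of_succ_lt h)
    omega

lemma chain_cons_iff {n M : ℕ} (x : Fin (n+1)) (p : Fin M → Fin (n+1)) :
    Chain (Fin.cons x p) ↔
      (∀ h : 0 < M, (p ⟨0, h⟩ : ℕ) ≤ (x : ℕ) + 1) ∧ Chain p := by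
  constructor
  · intro hc
    refine ⟨fun h0 => ?_, fun k h => ?_⟩
    · have := hc 0 (Nat.succ_lt_succ h0)
      simpa [cons_mk_succ, cons_mk_zero] using this
    · have := hc (k+1) (Nat.succ_lt_succ h)
      simpa [cons_mk_succ] using this
  · rintro ⟨h0, hc⟩ k h
    cases k with
    | zero =>
      simpa [cons_mk_succ, cons_mk_zero] using h0 (Nat.lt_of_succ_lt_succ h)
    | succ k =>
      simpa [cons_mk_succ] using hc k (Nat.lt_of_succ_lt_succ h)

lemma cond_cons_iff {n M d : ℕ} (x : Fin (n+1)) (p : Fin M → Fin (n+1)) :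
    Cond d (Fin.cons x p) ↔
      (1 ≤ (x : ℕ) ∧ (x : ℕ) ≤ d + 1) ∧
      (∀ k : Fin M, 1 ≤ (p k : ℕ) ∧ (p k : ℕ) ≤ d + (k : ℕ) + 2) ∧
      (∀ h : 0 < M, (p ⟨0, h⟩ : ℕ) ≤ (x : ℕ) + 1) ∧ Chain p := by
  unfold Cond
  rw [chain_cons_iff]
  constructor
  · rintro ⟨hb, h0, hc⟩
    refine ⟨?_, fun k => ?_, h0, hc⟩
    · simpa using hb 0
    · have := hb k.succ
      rw [Fin.cons_succ] at this
      simpa [Fin.val_succ, Nat.add_assoc] using this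
  · rintro ⟨hx, hp, h0, hc⟩
    refine ⟨fun k => ?_, h0, hc⟩
    rcases k with ⟨kv, hk⟩
    cases kv with
    | zero => simpa [cons_mk_zero] using hx
    | succ kv =>
      have := hp ⟨kv, Nat.lt_of_succ_lt_succ hk⟩
      rw [cons_mk_succ]
      simpa [Nat.add_assoc] using this

lemma prod_cons {M : ℕ} {n : ℕ} (ζ : ℕ → ℝ) (x : Fin (n+1)) (p : Fin M → Fin (n+1)) :
    (∏ k : Fin (M+1), ζ (((Fin.cons x p : Fin (M+1) → Fin (n+1))) k)) = ζ (x : ℕ) * ∏ k : Fin M, ζ (p k) := by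
  rw [Fin.prod_univ_succ]
  simp [Fin.cons_succ, Fin.cons_zero]

lemma S_zero (n : ℕ) (ζ : ℕ → ℝ) (d : ℕ) : S n ζ 0 d = 1 := by
  unfold S Cond Chain
  simp

lemma S_succ (n : ℕ) (ζ : ℕ → ℝ) (M d : ℕ) (hd : M + 1 + d ≤ n) :
    S n ζ (M+1) d = (if 1 ≤ d then S n ζ (M+1) (d-1) else 0)
      + ζ (d+1) * S n ζ M (d+1) := by
  have hsum : ∀ e : ℕ, S n ζ (M+1) e = ∑ x : Fin (n+1), ∑ p : Fin M → Fin (n+1),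
      (if Cond e (Fin.cons x p) then ζ (x : ℕ) * ∏ k, ζ (p k) else 0) := by
    intro e
    rw [S, ← Equiv.sum_comp (Fin.consEquiv (fun _ => Fin (n+1))), Fintype.sum_prod_type]
    refine Finset.sum_congr rfl fun x _ => Finset.sum_congr rfl fun p _ => ?_
    have hce : (Fin.consEquiv (fun _ => Fin (n+1))) (x, p) = Fin.cons x p := rfl
    rw [hce, prod_cons]
  rw [hsum d]
  have key : ∀ (x : Fin (n+1)) (p : Fin M → Fin (n+1)),
      (if Cond d (Fin.cons x p) then ζ (x : ℕ) * ∏ k, ζ (p k) else 0)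
      = (if 1 ≤ d then (if Cond (d-1) (Fin.cons x p) then ζ (x : ℕ) * ∏ k, ζ (p k) else 0) else 0)
        + (if x = (⟨d+1, by omega⟩ : Fin (n+1))
            then ζ (x : ℕ) * (if Cond (d+1) p then ∏ k, ζ (p k) else 0) else 0) := by
    intro x p
    by_cases hC : Cond d (Fin.cons x p)
    · rw [cond_cons_iff] at hC
      obtain ⟨⟨hx1, hx2⟩, hp, h0, hc⟩ := hC
      by_cases hxd : (x : ℕ) = d + 1
      · have hxe : x = (⟨d+1, by omega⟩ : Fin (n+1)) := by
          apply Fin.ext; simpa using hxd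
        have hC1 : Cond (d+1) p := by
          refine ⟨fun k => ?_, hc⟩
          have := hp k; omega
        have hnot : ¬ (1 ≤ d ∧ Cond (d-1) (Fin.cons x p)) := by
          rintro ⟨hd1, hC2⟩
          rw [cond_cons_iff] at hC2
          have := hC2.1.2
          omega
        rw [if_pos (by rw [cond_cons_iff]; exact ⟨⟨hx1, hx2⟩, hp, h0, hc⟩),
          if_pos hxe, if_pos hC1]
        by_cases hd1 : 1 ≤ d
        · rw [if_pos hd1, if_neg (fun h => hnot ⟨hd1, h⟩)]; ring
        · rw [if_neg hd1]; ring
      · have hxe : x ≠ (⟨d+1, by omega⟩ : Fin (n+1)) := by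
          intro h; apply hxd; rw [h]
        have hd1 : 1 ≤ d := by omega
        have hC2 : Cond (d-1) (Fin.cons x p) := by
          rw [cond_cons_iff]
          refine ⟨⟨hx1, by omega⟩, fun k => ?_, h0, hc⟩
          have h1 := hp k
          rcases Nat.eq_zero_or_pos M with hM | hM
          · exact absurd k.isLt (by omega)
          · have h2 := chain_le hc hM k k.isLt
            have h3 := h0 hM
            have h5 : (p ⟨(k : ℕ), k.isLt⟩ : ℕ) = (p k : ℕ) := rfl
            omega
        rw [if_pos (by rw [cond_cons_iff]; exact ⟨⟨hx1, hx2⟩, hp, h0, hc⟩),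
          if_pos hd1, if_pos hC2, if_neg hxe]
        ring
    · rw [if_neg hC]
      have h1 : ∀ hd1 : 1 ≤ d, ¬ Cond (d-1) (Fin.cons x p) := by
        intro hd1 hC2
        apply hC
        rw [cond_cons_iff] at hC2 ⊢
        obtain ⟨⟨a1, a2⟩, b, c, e⟩ := hC2
        exact ⟨⟨a1, by omega⟩, fun k => by have := b k; omega, c, e⟩
      have h2 : ¬ (x = (⟨d+1, by omega⟩ : Fin (n+1)) ∧ Cond (d+1) p) := by
        rintro ⟨hxe, hC1⟩
        apply hC
        rw [cond_cons_iff]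
        have hxv : (x : ℕ) = d + 1 := by rw [hxe]
        obtain ⟨b, c⟩ := hC1
        refine ⟨⟨by omega, by omega⟩, fun k => by have := b k; omega, fun h0 => ?_, c⟩
        have h6 := (b ⟨0, h0⟩).2
        have hv : ((⟨0, h0⟩ : Fin M) : ℕ) = 0 := rfl
        omega
      by_cases hd1 : 1 ≤ d
      · rw [if_pos hd1, if_neg (h1 hd1)]
        by_cases hxe : x = (⟨d+1, by omega⟩ : Fin (n+1))
        · rw [if_pos hxe, if_neg (fun h => h2 ⟨hxe, h⟩)]; ring
        · rw [if_neg hxe]; ring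
      · rw [if_neg hd1]
        by_cases hxe : x = (⟨d+1, by omega⟩ : Fin (n+1))
        · rw [if_pos hxe, if_neg (fun h => h2 ⟨hxe, h⟩)]; ring
        · rw [if_neg hxe]; ring
  have := Finset.sum_congr rfl (fun x (_ : x ∈ Finset.univ) =>
    Finset.sum_congr rfl (fun p (_ : p ∈ Finset.univ) => key x p))
  rw [this]
  rw [Finset.sum_congr rfl (fun x (_ : x ∈ (Finset.univ : Finset (Fin (n+1)))) =>
    Finset.sum_add_distrib), Finset.sum_add_distrib]
  congr 1
  · by_cases hd1 : 1 ≤ d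
    · simp only [if_pos hd1]
      rw [hsum (d-1)]
    · simp only [if_neg hd1]
      simp
  · have step : ∀ x : Fin (n+1),
        (∑ p : Fin M → Fin (n+1), (if x = (⟨d+1, by omega⟩ : Fin (n+1))
            then ζ (x : ℕ) * (if Cond (d+1) p then ∏ k, ζ (p k) else 0) else 0))
        = (if x = (⟨d+1, by omega⟩ : Fin (n+1)) then ζ (x : ℕ) * S n ζ M (d+1) else 0) := by
      intro x
      by_cases hxe : x = (⟨d+1, by omega⟩ : Fin (n+1))
      · simp only [if_pos hxe, ← Finset.mul_sum]; rfl
      · simp [hxe]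
    rw [Finset.sum_congr rfl (fun x _ => step x)]
    rw [Finset.sum_ite_eq' Finset.univ]
    simp

lemma G_eq_S (n : ℕ) (ζ : ℕ → ℝ) (G : ℕ → ℕ → ℝ)
    (hG0 : ∀ j, G 0 j = 1)
    (hGz : ∀ i j, j < i → G i j = 0)
    (hGrec : ∀ i j, 1 ≤ i → i ≤ j → G i j = G i (j - 1) + ζ (j - i + 1) * G (i - 1) j) :
    ∀ M d, M + d ≤ n → G M (M + d) = S n ζ M d := by
  intro M
  induction M with
  | zero =>
    intro d hd
    rw [hG0, S_zero]
  | succ M ih =>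
    intro d
    induction d with
    | zero =>
      intro hd
      have hrec := hGrec (M+1) (M+1) (by omega) le_rfl
      have h1 : G (M+1) (M+1-1) = 0 := hGz _ _ (by omega)
      have h2 : M+1 - (M+1) + 1 = 1 := by omega
      have h3 : M+1-1 = M := by omega
      rw [h2, h1, h3] at hrec
      have h4 := ih 1 (by omega)
      rw [show M + 1 + 0 = M + 1 from rfl, hrec, h4,
        S_succ n ζ M 0 (by omega)]
      simp
    | succ d ihd =>
      intro hd
      have hrec := hGrec (M+1) (M+1+(d+1)) (by omega) (by omega)
      have h2 : M+1+(d+1) - (M+1) + 1 = d + 2 := by omega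
      have h3 : M+1+(d+1) - 1 = M+1+d := by omega
      have h4 : M+1-1 = M := by omega
      rw [h2, h3, h4] at hrec
      have h5 := ih (d+2) (by omega)
      rw [show M + (d+2) = M + 1 + (d+1) from by omega] at h5
      rw [hrec, ihd (by omega), h5, S_succ n ζ M (d+1) (by omega)]
      simp

end GDiagAux

/-- With `ζ₀ = 0`, `ζ₁ = u₁`, `ζ_j = (1-u_{j-1})u_j` and the array `G` defined by
`G_{i,j} = 0` for `i > j`, `G_{0,j} = 1` and
`G_{i,j} = G_{i,j-1} + ζ_{j-i+1} G_{i-1,j}` for `1 ≤ i ≤ j`, one has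
`G_{n,n} = Σ_{(i₁,…,i_n)} ζ_{i_n} ⋯ ζ_{i_1}`, the sum running over all tuples
with `i₁ = 1`, `i_k ∈ {1,…,n}` and `i_k ≤ i_{k-1} + 1`. -/
theorem G_diag_eq_sum_over_paths (n : ℕ) (hn : 1 ≤ n)
    (u : ℕ → ℝ) (hu : ∀ j, u j ∈ Set.Ioo (0:ℝ) 1)
    (ζ : ℕ → ℝ) (hζ0 : ζ 0 = 0) (hζ1 : ζ 1 = u 1)
    (hζ : ∀ j, 2 ≤ j → ζ j = (1 - u (j - 1)) * u j)
    (G : ℕ → ℕ → ℝ)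
    (hG0 : ∀ j, G 0 j = 1)
    (hGz : ∀ i j, j < i → G i j = 0)
    (hGrec : ∀ i j, 1 ≤ i → i ≤ j → G i j = G i (j - 1) + ζ (j - i + 1) * G (i - 1) j) :
    G n n = ∑ i : Fin n → Fin (n + 1),
      if ((i ⟨0, hn⟩ : ℕ) = 1 ∧ (∀ k, 1 ≤ (i k : ℕ)) ∧
          ∀ k : ℕ, ∀ h : k + 1 < n,
            (i ⟨k + 1, h⟩ : ℕ) ≤ (i ⟨k, Nat.lt_of_succ_lt h⟩ : ℕ) + 1)
      then ∏ k : Fin n, ζ (i k) else 0 := by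
  have hmain := GDiagAux.G_eq_S n ζ G hG0 hGz hGrec n 0 (by omega)
  rw [show n + 0 = n from rfl] at hmain
  rw [hmain, GDiagAux.S]
  refine Finset.sum_congr rfl fun i _ => ?_
  congr 1
  apply propext
  constructor
  · rintro ⟨hb, hc⟩
    refine ⟨?_, fun k => (hb k).1, hc⟩
    have h := hb ⟨0, hn⟩
    have hv : ((⟨0, hn⟩ : Fin n) : ℕ) = 0 := rfl
    omega
  · rintro ⟨h0, h1, hc⟩
    refine ⟨fun k => ⟨h1 k, ?_⟩, hc⟩
    have h2 := GDiagAux.chain_le hc hn (k : ℕ) k.isLt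
    have h3 : (i ⟨(k : ℕ), k.isLt⟩ : ℕ) = (i k : ℕ) := rfl
    omega
end

section
/- The Jacobian of the linear map X ↦ A X Aᵀ + B on the space of real symmetric p×p matrices, where A is a fixed nonsingular p×p matrix and B a fixed symmetric matrix, equals (det A)^{p+1} in absolute value; equivalently, the pushforward of Lebesgue measure on S_p(ℝ) under this map scales volumes by |det A|^{p+1}. -/
open MeasureTheory Matrix

/-- The symmetric matrix built from its upper-triangular coordinates. -/
def symOfCoords (p : ℕ) (f : { q : Fin p × Fin p // q.1 ≤ q.2 } → ℝ) :
    Matrix (Fin p) (Fin p) ℝ :=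
  Matrix.of fun i j => if h : i ≤ j then f ⟨(i, j), h⟩ else f ⟨(j, i), le_of_not_ge h⟩

/-- The map `X ↦ A X Aᵀ + B` on symmetric matrices, in the coordinates
`x_{ij}`, `i ≤ j`. -/
def conjAffineCoords (p : ℕ) (A B : Matrix (Fin p) (Fin p) ℝ)
    (f : { q : Fin p × Fin p // q.1 ≤ q.2 } → ℝ) :
    { q : Fin p × Fin p // q.1 ≤ q.2 } → ℝ :=
  fun q => (A * symOfCoords p f * Aᵀ + B) q.1.1 q.1.2

namespace JacAux

open Polynomial

lemma symOfCoords_apply (p : ℕ) (f : { q : Fin p × Fin p // q.1 ≤ q.2 } → ℝ)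
    (i j : Fin p) : symOfCoords p f i j =
      if h : i ≤ j then f ⟨(i, j), h⟩ else f ⟨(j, i), le_of_not_ge h⟩ := rfl

lemma symOfCoords_add (p : ℕ) (f g : { q : Fin p × Fin p // q.1 ≤ q.2 } → ℝ) :
    symOfCoords p (f + g) = symOfCoords p f + symOfCoords p g := by
  ext i j
  by_cases h : i ≤ j <;> simp [symOfCoords_apply, h]

lemma symOfCoords_smul (p : ℕ) (c : ℝ) (f : { q : Fin p × Fin p // q.1 ≤ q.2 } → ℝ) :
    symOfCoords p (c • f) = c • symOfCoords p f := by
  ext i j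
  by_cases h : i ≤ j <;> simp [symOfCoords_apply, h]

lemma symOfCoords_isSymm (p : ℕ) (f : { q : Fin p × Fin p // q.1 ≤ q.2 } → ℝ) :
    (symOfCoords p f).IsSymm := by
  ext i j
  simp only [transpose_apply, symOfCoords_apply]
  rcases le_or_gt i j with h | h
  · rcases eq_or_lt_of_le h with rfl | h'
    · simp
    · rw [dif_pos h, dif_neg (not_le.2 h')]
  · rw [dif_neg (not_le.2 h), dif_pos h.le]

lemma symOfCoords_coords (p : ℕ) (X : Matrix (Fin p) (Fin p) ℝ) (hX : X.IsSymm) :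
    symOfCoords p (fun q => X q.1.1 q.1.2) = X := by
  ext i j
  simp only [symOfCoords_apply]
  split
  · rfl
  · exact (Matrix.IsSymm.apply hX j i).symm ▸ (congrFun (congrFun hX.eq j) i) ▸ rfl

/-- The linear part, as a linear map on the coordinate space. -/
def symL (p : ℕ) (A : Matrix (Fin p) (Fin p) ℝ) :
    ({ q : Fin p × Fin p // q.1 ≤ q.2 } → ℝ) →ₗ[ℝ] ({ q : Fin p × Fin p // q.1 ≤ q.2 } → ℝ) where
  toFun f := fun q => (A * symOfCoords p f * Aᵀ) q.1.1 q.1.2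
  map_add' f g := by
    funext q
    simp [symOfCoords_add, Matrix.mul_add, Matrix.add_mul]
  map_smul' c f := by
    funext q
    simp [symOfCoords_smul, Matrix.mul_smul, Matrix.smul_mul]

lemma symL_apply (p : ℕ) (A : Matrix (Fin p) (Fin p) ℝ)
    (f : { q : Fin p × Fin p // q.1 ≤ q.2 } → ℝ) (q) :
    symL p A f q = (A * symOfCoords p f * Aᵀ) q.1.1 q.1.2 := rfl

lemma conj_isSymm {p : ℕ} {X : Matrix (Fin p) (Fin p) ℝ} (hX : X.IsSymm)
    (A : Matrix (Fin p) (Fin p) ℝ) : (A * X * Aᵀ).IsSymm := by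
  unfold Matrix.IsSymm
  rw [Matrix.transpose_mul, Matrix.transpose_mul, Matrix.transpose_transpose, hX.eq,
    Matrix.mul_assoc]

lemma symOfCoords_symL (p : ℕ) (A : Matrix (Fin p) (Fin p) ℝ)
    (f : { q : Fin p × Fin p // q.1 ≤ q.2 } → ℝ) :
    symOfCoords p (symL p A f) = A * symOfCoords p f * Aᵀ :=
  symOfCoords_coords p _ (conj_isSymm (symOfCoords_isSymm p f) A)

lemma symL_mul (p : ℕ) (A B : Matrix (Fin p) (Fin p) ℝ) :
    symL p (A * B) = (symL p A).comp (symL p B) := by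
  ext f q
  simp only [LinearMap.comp_apply, symL_apply, symOfCoords_symL]
  rw [Matrix.transpose_mul]
  noncomm_ring

lemma prod_pairs (p : ℕ) (d : Fin p → ℝ) :
    ∏ q : { q : Fin p × Fin p // q.1 ≤ q.2 }, (d q.1.1 * d q.1.2) = (∏ i, d i) ^ (p + 1) := by
  have h1 : ∏ q : { q : Fin p × Fin p // q.1 ≤ q.2 }, (d q.1.1 * d q.1.2)
      = ∏ x ∈ Finset.univ.filter (fun x : Fin p × Fin p => x.1 ≤ x.2), (d x.1 * d x.2) :=
    (Finset.prod_subtype (Finset.univ.filter (fun x : Fin p × Fin p => x.1 ≤ x.2))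
      (fun x => by simp) (fun x => d x.1 * d x.2)).symm
  rw [h1, Finset.prod_filter, Fintype.prod_prod_type]
  have hfil : ∀ i : Fin p, Finset.univ.filter (fun j : Fin p => i ≤ j) = Finset.Ici i := by
    intro i; ext j; simp
  have h2 : ∀ i : Fin p, (∏ j : Fin p, if i ≤ j then d i * d j else 1)
      = d i ^ (p - (i : ℕ)) * ∏ j ∈ Finset.Ici i, d j := by
    intro i
    rw [← Finset.prod_filter, hfil i, Finset.prod_mul_distrib, Finset.prod_const, Fin.card_Ici]
  simp only [h2]
  rw [Finset.prod_mul_distrib]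
  have h3 : (∏ i : Fin p, ∏ j ∈ Finset.Ici i, d j) = ∏ j : Fin p, d j ^ ((j : ℕ) + 1) := by
    rw [Finset.prod_comm' (s' := fun j => Finset.Iic j) (t' := Finset.univ)
      (by intro i j; simp)]
    refine Finset.prod_congr rfl fun j _ => ?_
    rw [Finset.prod_const, Fin.card_Iic]
  rw [h3, ← Finset.prod_mul_distrib, ← Finset.prod_pow]
  refine Finset.prod_congr rfl fun i _ => ?_
  rw [← pow_add]
  congr 1
  have := i.isLt
  omega

lemma symL_diagonal_apply (p : ℕ) (d : Fin p → ℝ)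
    (f : { q : Fin p × Fin p // q.1 ≤ q.2 } → ℝ) :
    symL p (diagonal d) f = fun q : { q : Fin p × Fin p // q.1 ≤ q.2 } => (d q.1.1 * d q.1.2) * f q := by
  funext q
  rw [symL_apply, Matrix.diagonal_transpose, Matrix.mul_diagonal, Matrix.diagonal_mul,
    symOfCoords_apply, dif_pos q.2]
  ring

lemma det_symL_diagonal (p : ℕ) (d : Fin p → ℝ) :
    LinearMap.det (symL p (diagonal d)) = (∏ i, d i) ^ (p + 1) := by
  have hm : LinearMap.toMatrix (Pi.basisFun ℝ _) (Pi.basisFun ℝ _) (symL p (diagonal d))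
      = Matrix.diagonal
          (fun q : { q : Fin p × Fin p // q.1 ≤ q.2 } => d q.1.1 * d q.1.2) := by
    ext q r
    rw [LinearMap.toMatrix_apply]
    simp [symL_diagonal_apply, Matrix.diagonal_apply, Pi.single_apply]
  rw [← LinearMap.det_toMatrix (Pi.basisFun ℝ _), hm, Matrix.det_diagonal, prod_pairs]

lemma det_one_add_nilpotent {n : Type*} [DecidableEq n] [Fintype n]
    (N : Matrix n n ℝ) (hN : IsNilpotent N) : (1 + N).det = 1 := by
  have hc : N.charpoly = X ^ (Fintype.card n) := by
    rw [← sub_eq_zero]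
    exact (Matrix.isNilpotent_charpoly_sub_pow_of_isNilpotent hN).eq_zero
  have h2 := _root_.eval_det (charmatrix N) (-1 : ℝ)
  rw [matPolyEquiv_charmatrix] at h2
  have hl : Polynomial.eval (-1 : ℝ) (charmatrix N).det = (-1 : ℝ) ^ Fintype.card n := by
    rw [← Matrix.charpoly, hc]; simp
  have hr : (Polynomial.eval (Matrix.scalar n (-1 : ℝ)) (X - C N)) = -(1 + N) := by
    simp only [eval_sub, eval_X, eval_C]
    rw [Matrix.scalar_apply]
    ext i j
    by_cases h : i = j <;> simp [Matrix.diagonal_apply, h] <;> ring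
  rw [hl, hr, Matrix.det_neg] at h2
  exact (mul_left_cancel₀ (a := (-1 : ℝ) ^ Fintype.card n)
    (pow_ne_zero _ (by norm_num)) (by rw [← h2, mul_one])).symm

lemma det_symL_transvection (p : ℕ) (t : TransvectionStruct (Fin p) ℝ) :
    LinearMap.det (symL p t.toMatrix) = 1 := by
  set E := Matrix.single t.i t.j t.c with hEdef
  have hE : E * E = 0 := Matrix.single_mul_single_of_ne _ _ _ _ (Ne.symm t.hij) _
  have hET : Eᵀ * Eᵀ = 0 := by rw [← Matrix.transpose_mul, hE, Matrix.transpose_zero]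
  have hE2 : ∀ X : Matrix (Fin p) (Fin p) ℝ, E * (E * X) = 0 := fun X => by
    rw [← Matrix.mul_assoc, hE, Matrix.zero_mul]
  set m : Matrix (Fin p) (Fin p) ℝ → Matrix (Fin p) (Fin p) ℝ :=
    fun S => E * S + S * Eᵀ + E * S * Eᵀ with hmdef
  have hT : t.toMatrix = 1 + E := by
    rcases t with ⟨i, j, hij, c⟩
    rfl
  have hm3 : ∀ S, m (m (m S)) = 0 := by
    intro S
    simp only [hmdef, Matrix.mul_add, Matrix.add_mul, Matrix.mul_assoc]
    simp [hE2, hET, Matrix.mul_zero, Matrix.zero_mul]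
  set u : Module.End ℝ ({ q : Fin p × Fin p // q.1 ≤ q.2 } → ℝ) :=
    symL p t.toMatrix - 1 with hudef
  have key : ∀ f, u f = fun q => (m (symOfCoords p f)) q.1.1 q.1.2 := by
    intro f
    funext q
    have h1 : u f q = symL p t.toMatrix f q - f q := rfl
    rw [h1, symL_apply, hT]
    have : (1 + E) * symOfCoords p f * (1 + E)ᵀ
        = symOfCoords p f + m (symOfCoords p f) := by
      rw [Matrix.transpose_add, Matrix.transpose_one, hmdef]
      noncomm_ring
    rw [this]
    have hfq : symOfCoords p f q.1.1 q.1.2 = f q := by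
      rw [symOfCoords_apply, dif_pos q.2]
    simp [Matrix.add_apply, hfq]
  have msymm : ∀ S : Matrix (Fin p) (Fin p) ℝ, S.IsSymm → (m S).IsSymm := by
    intro S hS
    unfold Matrix.IsSymm
    simp only [hmdef, Matrix.transpose_add, Matrix.transpose_mul,
      Matrix.transpose_transpose, hS.eq]
    rw [Matrix.mul_assoc]
    abel
  have keySym : ∀ f, symOfCoords p (u f) = m (symOfCoords p f) := by
    intro f
    rw [key f]
    exact symOfCoords_coords p _ (msymm _ (symOfCoords_isSymm p f))
  have hu3 : u ^ 3 = 0 := by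
    apply LinearMap.ext
    intro f
    show (u ^ 3) f = 0
    have : (u ^ 3) f = u (u (u f)) := by
      rw [pow_succ, pow_succ, pow_one]
      rfl
    rw [this, key (u (u f)), keySym, keySym, hm3]
    funext q
    simp
  have hsum : symL p t.toMatrix = 1 + u := by rw [hudef]; abel
  set b := Pi.basisFun ℝ { q : Fin p × Fin p // q.1 ≤ q.2 } with hbdef
  have hN : IsNilpotent (LinearMap.toMatrix b b u) := by
    exact ⟨3, by rw [LinearMap.toMatrix_pow, hu3, map_zero]⟩
  rw [← LinearMap.det_toMatrix b, hsum, map_add, LinearMap.toMatrix_one]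
  exact det_one_add_nilpotent _ hN

lemma det_symL (p : ℕ) (A : Matrix (Fin p) (Fin p) ℝ) (hA : A.det ≠ 0) :
    LinearMap.det (symL p A) = A.det ^ (p + 1) := by
  apply Matrix.diagonal_transvection_induction_of_det_ne_zero
    (fun M => LinearMap.det (symL p M) = M.det ^ (p + 1)) A hA
  · intro D hD
    rw [det_symL_diagonal, Matrix.det_diagonal]
  · intro t
    rw [det_symL_transvection, Matrix.TransvectionStruct.det, one_pow]
  · intro M N hM hN h1 h2
    rw [symL_mul, LinearMap.det_comp, h1, h2, Matrix.det_mul, mul_pow]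

end JacAux

/-- The Jacobian of `X ↦ A X Aᵀ + B` on the space of real symmetric `p×p`
matrices (with Lebesgue measure in the coordinates `x_{ij}`, `i ≤ j`) equals
`|det A|^{p+1}`: the map scales volumes by `|det A|^{p+1}`. -/
theorem jacobian_conj_affine_symmetric (p : ℕ)
    (A B : Matrix (Fin p) (Fin p) ℝ) (hA : IsUnit A.det) (hB : B.IsSymm) :
    ∀ s : Set ({ q : Fin p × Fin p // q.1 ≤ q.2 } → ℝ), MeasurableSet s →
      volume (conjAffineCoords p A B '' s) =
        ENNReal.ofReal (|A.det| ^ (p + 1)) * volume s := by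
  intro s hs
  set c := fun q : { q : Fin p × Fin p // q.1 ≤ q.2 } => B q.1.1 q.1.2 with hcdef
  have hc : conjAffineCoords p A B = fun f => JacAux.symL p A f + c := rfl
  have himg : conjAffineCoords p A B '' s = (· + c) '' (JacAux.symL p A '' s) := by
    rw [hc]
    exact Set.image_comp (· + c) (⇑(JacAux.symL p A)) s
  rw [himg, Set.image_add_right, measure_preimage_add_right,
    Measure.addHaar_image_linearMap, JacAux.det_symL p A hA.ne_zero, abs_pow]
end
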